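/- arXiv:2311.02906 — 9 statements merged into one kernel-verified Lean document; each statement's English description precedes it below -/
import Mathlib

section
/- Let X be a set, f : X → X a map, and Y ⊆ X a subset with f(Y) ⊆ Y. Then the following are equivalent: (1) there exists s₀ ≥ 0 such that for all s ≥ s₀, f⁻ˢ⁻¹(Y) \ f⁻ˢ(Y) = ∅; (2) there exists n ≥ 1 and s₀ ≥ 0 such that for all s ≥ s₀, (fⁿ)⁻ˢ⁻¹(Y) \ (fⁿ)⁻ˢ(Y) = ∅; (3) there exists s₀ ≥ 0 such that for every x ∈ X, if fˢ(x) ∈ Y for some s ≥ 0, then f^{s₀}(x) ∈ Y. -/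
/-- **Preimages Question, elementary equivalences.**
For a self-map `f` on a set `X` and an `f`-invariant subset `Y ⊆ X`, the following are
equivalent: (1) the iterated preimages of `Y` stabilize; (2) they stabilize for some
iterate `fⁿ` (`n ≥ 1`); (3) there is a uniform `s₀` such that any point eventually
entering `Y` is already in `Y` after `s₀` steps. -/
theorem preimages_question_tfae {X : Type*} (f : X → X) (Y : Set X)
    (hY : Set.MapsTo f Y Y) :
    List.TFAE [
      ∃ s₀ : ℕ, ∀ s ≥ s₀, f^[s + 1] ⁻¹' Y \ f^[s] ⁻¹' Y = ∅,
      ∃ n : ℕ, 1 ≤ n ∧ ∃ s₀ : ℕ, ∀ s ≥ s₀, (f^[n])^[s + 1] ⁻¹' Y \ (f^[n])^[s] ⁻¹' Y = ∅,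
      ∃ s₀ : ℕ, ∀ x : X, (∃ s : ℕ, f^[s] x ∈ Y) → f^[s₀] x ∈ Y] := by
  have key : ∀ (x : X) (s t : ℕ), s ≤ t → f^[s] x ∈ Y → f^[t] x ∈ Y := by
    intro x s t hst hx
    have h : f^[t] x = f^[t - s] (f^[s] x) := by
      rw [← Function.iterate_add_apply, Nat.sub_add_cancel hst]
    rw [h]
    exact hY.iterate (t - s) hx
  tfae_have 1 → 2
  | ⟨s₀, h⟩ => ⟨1, le_refl 1, s₀, by simpa using h⟩
  tfae_have 2 → 3
  | ⟨n, hn, s₀, h⟩ => by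
    refine ⟨n * s₀, fun x ⟨s, hs⟩ => ?_⟩
    have stab : ∀ k, (f^[n])^[s₀ + k] x ∈ Y → (f^[n])^[s₀] x ∈ Y := by
      intro k
      induction k with
      | zero => simp
      | succ k ih =>
        intro hk
        apply ih
        have := Set.diff_eq_empty.mp (h (s₀ + k) (Nat.le_add_right _ _))
        exact this hk
    have hs' : (f^[n])^[s₀ + s] x ∈ Y := by
      rw [← Function.iterate_mul]
      exact key x s (n * (s₀ + s)) (le_trans (Nat.le_add_left s s₀)
        (Nat.le_mul_of_pos_left _ hn)) hs
    have := stab s hs'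
    rwa [← Function.iterate_mul] at this
  tfae_have 3 → 1
  | ⟨s₀, h⟩ => by
    refine ⟨s₀, fun s hs => Set.diff_eq_empty.mpr fun x hx => ?_⟩
    exact key x s₀ s hs (h x ⟨s + 1, hx⟩)
  tfae_finish
end

section
/- Let V be a finite-dimensional vector space over ℚ. There exists n₀ ∈ ℤ≥1 depending only on dim V with the following property: for any ℚ-linear automorphism f : V → V and any subspace W ⊆ V which is f-periodic (meaning fⁿ(W) = W for some n ≥ 1), we have f^{n₀}(W) = W. -/
open Polynomial IntermediateField



lemma dvd_factorial_of_totient_le {k D : ℕ} (hk : 0 < k) (h : k.totient ≤ D) :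
    k ∣ ((D + 1) * D).factorial := by
  have hk0 : k ≠ 0 := hk.ne'
  have hM0 : ((D + 1) * D).factorial ≠ 0 := (Nat.factorial_pos _).ne'
  rw [← Nat.factorization_le_iff_dvd hk0 hM0]
  intro p
  set v := k.factorization p with hv
  rcases Nat.eq_zero_or_pos v with h0 | hvpos
  · simp [← hv, h0]
  by_cases hp : p.Prime
  case neg =>
    have : v = 0 := by rw [hv, Nat.factorization_eq_zero_of_not_prime _ hp]
    omega
  -- p ^ v ∣ k
  have hdvd : p ^ v ∣ k := Nat.ordProj_dvd k p
  have htot : (p ^ v).totient ∣ k.totient := Nat.totient_dvd_of_dvd hdvd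
  have htpos : 0 < k.totient := Nat.totient_pos.mpr hk
  have htle : (p ^ v).totient ≤ D := le_trans (Nat.le_of_dvd htpos htot) h
  have htv : (p ^ v).totient = p ^ (v - 1) * (p - 1) := Nat.totient_prime_pow hp hvpos
  have h1 : p ^ (v - 1) ≤ D := by
    calc p ^ (v-1) ≤ p ^ (v-1) * (p-1) := Nat.le_mul_of_pos_right _ (by have := hp.two_le; omega)
    _ ≤ D := htv ▸ htle
  have h2 : p ≤ D + 1 := by
    have : p - 1 ≤ D := by
      calc p - 1 ≤ p ^ (v-1) * (p-1) := Nat.le_mul_of_pos_left _ (Nat.pow_pos hp.pos)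
      _ ≤ D := htv ▸ htle
    omega
  have hpv : p ^ v ≤ (D + 1) * D := by
    have : p ^ v = p * p ^ (v - 1) := by
      conv_lhs => rw [show v = 1 + (v - 1) by omega, pow_add, pow_one]
    rw [this]
    exact Nat.mul_le_mul h2 h1
  have : p ^ v ∣ ((D + 1) * D).factorial :=
    Nat.dvd_factorial (Nat.pow_pos hp.pos) hpv
  exact (Nat.Prime.pow_dvd_iff_le_factorization hp hM0).mp this


lemma local_sol {K : Type*} [Field K] [CharZero K] {lam : K} (hl : lam ≠ 0)
    {m : ℕ} (hm : 1 ≤ m) (r n : ℕ) :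
    ∃ P : K[X], (X - C lam) ^ r ∣ P.comp (X ^ m) - X ^ n := by
  rcases Nat.eq_zero_or_pos r with hr0 | hr
  · exact ⟨0, by simp [hr0]⟩
  set q : K[X] := (X - C lam) ^ r with hqdef
  have hq : q.Monic := (monic_X_sub_C lam).pow r
  have hdegq : q.degree = (r : ℕ) := by
    rw [hqdef, degree_pow, degree_X_sub_C, nsmul_eq_mul, mul_one]
  let compX : K[X] →ₗ[K] K[X] := (Polynomial.aeval (X ^ m : K[X])).toLinearMap
  have hcompX : ∀ A : K[X], compX A = A.comp (X ^ m) := by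
    intro A
    simp only [compX, AlgHom.toLinearMap_apply]
    simp [Polynomial.comp, aeval_def, Polynomial.algebraMap_eq]
  let Lfull : K[X] →ₗ[K] K[X] := (Polynomial.modByMonicHom q).comp compX
  have hLfull : ∀ A : K[X], Lfull A = (A.comp (X ^ m)) %ₘ q := by
    intro A; simp [Lfull, modByMonicHom, hcompX]
  have hmem : ∀ A ∈ degreeLT K r, Lfull A ∈ degreeLT K r := by
    intro A _
    rw [mem_degreeLT, hLfull]
    exact lt_of_lt_of_le (degree_modByMonic_lt _ hq) (le_of_eq hdegq)
  -- injectivity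
  have hinj : ∀ A ∈ degreeLT K r, (A.comp (X ^ m)) %ₘ q = 0 → A = 0 := by
    intro A hAmem h
    by_contra hA0
    have hdvd : q ∣ A.comp (X ^ m) := (modByMonic_eq_zero_iff_dvd hq).mp h
    have hcomp_ne : A.comp (X ^ m) ≠ 0 := by
      intro h0
      rcases comp_eq_zero_iff.mp h0 with h1 | ⟨_, h2⟩
      · exact hA0 h1
      · have := congrArg natDegree h2
        rw [natDegree_X_pow, natDegree_C] at this
        omega
    set μ : K := lam ^ m with hμ
    obtain ⟨B, hB, hBnd⟩ := A.exists_eq_pow_rootMultiplicity_mul_and_not_dvd hA0 μ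
    set s : ℕ := rootMultiplicity μ A with hs
    have hBμ : B.eval μ ≠ 0 := fun hh => hBnd (dvd_iff_isRoot.mpr hh)
    set w : K[X] := X ^ m - C μ with hw
    have hw0 : w ≠ 0 := by
      intro h0
      have hd := degree_X_pow_sub_C (show 0 < m by omega) μ
      rw [← hw, h0, degree_zero] at hd
      exact absurd hd (by simp)
    have hAcomp : A.comp (X ^ m) = w ^ s * B.comp (X ^ m) := by
      rw [hB, mul_comp, pow_comp, sub_comp, X_comp, C_comp]
    have rm_w : rootMultiplicity lam w = 1 := by
      apply le_antisymm
      · by_contra hcon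
        push_neg at hcon
        have h2d : (X - C lam) ^ 2 ∣ w :=
          dvd_trans (pow_dvd_pow _ (by omega)) (pow_rootMultiplicity_dvd w lam)
        obtain ⟨h, hh⟩ := h2d
        have hder : derivative w = C (m : K) * X ^ (m - 1) := by
          rw [hw, derivative_sub, derivative_C, derivative_X_pow, sub_zero]
        have heval : (derivative w).eval lam = 0 := by
          rw [hh, derivative_mul, derivative_pow]
          simp [eval_mul, eval_pow, eval_sub, eval_X, eval_C]
        rw [hder] at heval
        simp only [eval_mul, eval_pow, eval_C, eval_X] at heval
        have hm0 : (m : K) ≠ 0 := Nat.cast_ne_zero.mpr (by omega)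
        exact absurd heval (by
          exact mul_ne_zero hm0 (pow_ne_zero _ hl))
      · have hroot : w.IsRoot lam := by simp [hw, IsRoot, hμ]
        exact (rootMultiplicity_pos hw0).mpr hroot
    have hws : ∀ t : ℕ, rootMultiplicity lam (w ^ t) = t := by
      intro t
      induction t with
      | zero =>
          rw [pow_zero]
          exact rootMultiplicity_eq_zero (by simp [IsRoot])
      | succ t ih =>
          rw [pow_succ, rootMultiplicity_mul (mul_ne_zero (pow_ne_zero _ hw0) hw0), ih, rm_w]
    have hnotroot : ¬(B.comp (X ^ m)).IsRoot lam := by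
      simp only [IsRoot, eval_comp, eval_pow, eval_X]
      rw [← hμ]
      exact hBμ
    have hfull : rootMultiplicity lam (A.comp (X ^ m)) = s := by
      rw [hAcomp] at hcomp_ne ⊢
      rw [rootMultiplicity_mul hcomp_ne, hws, rootMultiplicity_eq_zero hnotroot, add_zero]
    have hr_le : r ≤ s := by
      rw [← hfull]
      exact (le_rootMultiplicity_iff hcomp_ne).mpr hdvd
    have hs_lt : s < r := by
      have h1 : s ≤ A.natDegree := by
        have := natDegree_le_of_dvd (pow_rootMultiplicity_dvd A μ) hA0
        rwa [natDegree_pow, natDegree_X_sub_C, mul_one, ← hs] at this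
      have h2 : A.natDegree < r := by
        rw [natDegree_lt_iff_degree_lt hA0]
        exact mem_degreeLT.mp hAmem
      omega
    omega
  -- transport to Fin r → K and use injective → surjective
  let E := Polynomial.degreeLTEquiv K r
  let Lres : degreeLT K r →ₗ[K] degreeLT K r := Lfull.restrict hmem
  let T : (Fin r → K) →ₗ[K] (Fin r → K) :=
    (E : degreeLT K r →ₗ[K] (Fin r → K)).comp (Lres.comp (E.symm : (Fin r → K) →ₗ[K] degreeLT K r))
  have hTinj : Function.Injective T := by
    intro x y hxy
    simp only [T, LinearMap.comp_apply, LinearEquiv.coe_coe] at hxy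
    have h2 := E.injective hxy
    have hx := congrArg (Subtype.val) h2
    simp only [Lres, LinearMap.restrict_apply, hLfull] at hx
    have hdiff : (((E.symm x : degreeLT K r) : K[X]) - ((E.symm y : degreeLT K r) : K[X])).comp (X ^ m) %ₘ q = 0 := by
      rw [sub_comp, sub_modByMonic, hx, sub_self]
    have := hinj _ (sub_mem (E.symm x).2 (E.symm y).2) hdiff
    have hxy2 : (E.symm x : degreeLT K r) = E.symm y := Subtype.ext (by
      have := sub_eq_zero.mp this; exact this)
    exact E.symm.injective hxy2
  have hTsurj : Function.Surjective T := (LinearMap.injective_iff_surjective).mp hTinj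
  have htmem : (X ^ n : K[X]) %ₘ q ∈ degreeLT K r := by
    rw [mem_degreeLT]
    exact lt_of_lt_of_le (degree_modByMonic_lt _ hq) (le_of_eq hdegq)
  obtain ⟨x, hx⟩ := hTsurj (E ⟨(X ^ n : K[X]) %ₘ q, htmem⟩)
  refine ⟨(E.symm x : degreeLT K r), ?_⟩
  simp only [T, LinearMap.comp_apply, LinearEquiv.coe_coe] at hx
  have h2 := E.injective hx
  have hx2 := congrArg (Subtype.val) h2
  simp only [Lres, LinearMap.restrict_apply, hLfull] at hx2
  -- hx2 : (A.comp (X^m)) %ₘ q = X^n %ₘ q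
  set A : K[X] := ((E.symm x : degreeLT K r) : K[X])
  have h1 := modByMonic_add_div (A.comp (X ^ m)) q
  have h2' := modByMonic_add_div ((X : K[X]) ^ n) q
  have : A.comp (X ^ m) - X ^ n = q * (A.comp (X ^ m) /ₘ q) - q * ((X ^ n : K[X]) /ₘ q) := by
    conv_lhs => rw [← h1, ← h2']
    rw [hx2]
    ring
  rw [hqdef] at this ⊢
  rw [this]
  exact dvd_sub (dvd_mul_right _ _) (dvd_mul_right _ _)

noncomputable section PeriodicAux

def N0 (b : ℕ) : ℕ := ((b * b + 1) * (b * b)).factorial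

lemma isCoprime_X_sub_C' {K : Type*} [Field K] {a b : K} (hab : a ≠ b) :
    IsCoprime (X - C a : K[X]) (X - C b) := by
  refine ⟨C (b - a)⁻¹, -C (b - a)⁻¹, ?_⟩
  have hba : b - a ≠ 0 := sub_ne_zero.mpr (Ne.symm hab)
  have h : C (b-a)⁻¹ * (X - C a : K[X]) + -C (b-a)⁻¹ * (X - C b) = C (b-a)⁻¹ * (C b - C a) := by
    ring
  rw [h, ← C_sub, ← C_mul, inv_mul_cancel₀ hba, C_1]

lemma crt_poly {K : Type*} [Field K] (r : ℕ) (g : K → K[X]) (S : Finset K) :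
    ∃ P : K[X], ∀ μ ∈ S, (X - C μ) ^ r ∣ P - g μ := by
  classical
  induction S using Finset.induction_on with
  | empty => exact ⟨0, by simp⟩
  | @insert μ S hμS ih =>
      obtain ⟨P', hP'⟩ := ih
      have hcop : IsCoprime ((X - C μ) ^ r) (∏ ν ∈ S, (X - C ν) ^ r) := by
        apply IsCoprime.pow_left
        apply IsCoprime.prod_right
        intro ν hν
        refine (isCoprime_X_sub_C' (fun h : μ = ν => hμS ?_)).pow_right
        rwa [h]
      obtain ⟨u, v, huv⟩ := hcop
      refine ⟨g μ * (v * ∏ ν ∈ S, (X - C ν) ^ r) + P' * (u * (X - C μ) ^ r), ?_⟩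
      intro ν hν
      rcases Finset.mem_insert.mp hν with rfl | hνS
      · have key : g ν * (v * ∏ ν' ∈ S, (X - C ν') ^ r) + P' * (u * (X - C ν) ^ r) - g ν
            = (X - C ν) ^ r * (u * (P' - g ν)) := by
          have h1 : v * ∏ ν' ∈ S, (X - C ν') ^ r = 1 - u * (X - C ν) ^ r := by
            linear_combination huv
          rw [h1]; ring
        rw [key]
        exact Dvd.intro _ rfl
      · have key : g μ * (v * ∏ ν' ∈ S, (X - C ν') ^ r) + P' * (u * (X - C μ) ^ r) - g ν
            = (g μ - P') * v * ∏ ν' ∈ S, (X - C ν') ^ r + (P' - g ν) := by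
          have h2 : u * (X - C μ) ^ r = 1 - v * ∏ ν' ∈ S, (X - C ν') ^ r := by
            linear_combination huv
          rw [h2]; ring
        rw [key]
        refine dvd_add (Dvd.dvd.mul_left ?_ _) (hP' ν hνS)
        exact Finset.dvd_prod_of_mem _ hνS
      
lemma sum_comp' {K : Type*} [CommSemiring K] {ι : Type*} (s : Finset ι) (f : ι → K[X])
    (q : K[X]) : (∑ i ∈ s, f i).comp q = ∑ i ∈ s, (f i).comp q := by
  simp only [Polynomial.comp, Polynomial.eval₂_finset_sum]

end PeriodicAux

theorem key_dvd (b : ℕ) (p : ℚ[X]) (hmo : p.Monic) (h0 : p.coeff 0 ≠ 0)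
    (hdeg : p.natDegree ≤ b) {m : ℕ} (hm : 1 ≤ m) :
    ∃ Q : ℚ[X], p ∣ Q.comp (X ^ m) - X ^ (N0 b) := by
  classical
  rcases Nat.eq_zero_or_pos p.natDegree with hr0 | hr
  · exact ⟨0, by rw [(hmo.natDegree_eq_zero).mp hr0]; exact one_dvd _⟩
  set r := p.natDegree with hrdef
  set n := N0 b with hndef
  set K := p.SplittingField
  haveI : CharZero K := charZero_of_injective_algebraMap (algebraMap ℚ K).injective
  set pK : K[X] := p.map (algebraMap ℚ K) with hpKdef
  have hpK : pK.Monic := hmo.map _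
  have hpK0 : pK ≠ 0 := hpK.ne_zero
  have hsplits : pK.Splits :=
    SplittingField.splits p
  have hrK : pK.natDegree = r := hmo.natDegree_map _
  -- roots are nonzero
  have hroot0 : ∀ lam ∈ pK.roots, lam ≠ 0 := by
    intro lam hlam h0'
    have hisr : pK.IsRoot lam := isRoot_of_mem_roots hlam
    rw [h0'] at hisr
    have : pK.coeff 0 = 0 := by rwa [coeff_zero_eq_eval_zero]
    rw [hpKdef, coeff_map] at this
    exact h0 ((map_eq_zero_iff (algebraMap ℚ K) (algebraMap ℚ K).injective).mp this)
  have haev : ∀ lam ∈ pK.roots, (Polynomial.aeval lam) p = 0 := by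
    intro lam hlam
    rw [Polynomial.aeval_def, ← Polynomial.eval_map]
    exact isRoot_of_mem_roots hlam
  have hmindeg : ∀ lam ∈ pK.roots, (minpoly ℚ lam).natDegree ≤ b := by
    intro lam hlam
    exact le_trans (natDegree_le_of_dvd (minpoly.dvd ℚ lam (haev lam hlam)) hmo.ne_zero) hdeg
  have hint : ∀ lam : K, IsIntegral ℚ lam := fun lam => IsIntegral.of_finite ℚ lam
  -- the root-of-unity statement
  have hzeta : ∀ lam ∈ pK.roots, ∀ lam' ∈ pK.roots, lam ^ m = lam' ^ m →
      (lam * lam'⁻¹) ^ m = 1 ∧ (lam * lam'⁻¹) ^ n = 1 := by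
    intro lam hlam lam' hlam' hpow
    have hl0 : lam ≠ 0 := hroot0 lam hlam
    have hl'0 : lam' ≠ 0 := hroot0 lam' hlam'
    set ζ : K := lam * lam'⁻¹ with hζdef
    have hζm : ζ ^ m = 1 := by
      rw [hζdef, mul_pow, inv_pow, hpow, mul_inv_cancel₀ (pow_ne_zero _ hl'0)]
    refine ⟨hζm, ?_⟩
    have hfin : IsOfFinOrder ζ := isOfFinOrder_iff_pow_eq_one.mpr ⟨m, by omega, hζm⟩
    set k := orderOf ζ with hkdef
    have hk0 : 0 < k := hfin.orderOf_pos
    have hprim : IsPrimitiveRoot ζ k := IsPrimitiveRoot.orderOf ζ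
    -- field  E2 = ℚ(lam)(lam') has degree ≤ b*b
    set E1 : IntermediateField ℚ K := ℚ⟮lam⟯ with hE1def
    haveI : FiniteDimensional ℚ E1 := IntermediateField.adjoin.finiteDimensional (hint lam)
    set E2 : IntermediateField E1 K := E1⟮lam'⟯ with hE2def
    have hint' : IsIntegral E1 lam' := (hint lam').tower_top
    haveI : FiniteDimensional E1 E2 := IntermediateField.adjoin.finiteDimensional hint'
    haveI : FiniteDimensional ℚ E2 := FiniteDimensional.trans ℚ E1 E2
    have hfr1 : Module.finrank ℚ E1 ≤ b := by
      rw [hE1def, IntermediateField.adjoin.finrank (hint lam)]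
      exact hmindeg lam hlam
    have hfr2 : Module.finrank E1 E2 ≤ b := by
      rw [hE2def, IntermediateField.adjoin.finrank hint']
      have hdvd : minpoly E1 lam' ∣ (minpoly ℚ lam').map (algebraMap ℚ E1) :=
        minpoly.dvd_map_of_isScalarTower ℚ E1 lam'
      have hne : (minpoly ℚ lam').map (algebraMap ℚ E1) ≠ 0 :=
        (Polynomial.map_ne_zero_iff (algebraMap ℚ E1).injective).mpr
          (minpoly.ne_zero (hint lam'))
      calc (minpoly E1 lam').natDegree ≤ ((minpoly ℚ lam').map (algebraMap ℚ E1)).natDegree :=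
            natDegree_le_of_dvd hdvd hne
        _ = (minpoly ℚ lam').natDegree := natDegree_map _
        _ ≤ b := hmindeg lam' hlam'
    have hfrE2 : Module.finrank ℚ E2 ≤ b * b := by
      have := Module.finrank_mul_finrank ℚ E1 E2
      have h1 : 0 < Module.finrank ℚ E1 := Module.finrank_pos
      calc Module.finrank ℚ E2 = Module.finrank ℚ E1 * Module.finrank E1 E2 := this.symm
        _ ≤ b * b := Nat.mul_le_mul hfr1 hfr2
    -- ζ lives in E2
    have hlam'E2 : lam' ∈ E2 := IntermediateField.mem_adjoin_simple_self E1 lam'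
    have hlamE2 : lam ∈ E2 := by
      have h1 : lam ∈ E1 := IntermediateField.mem_adjoin_simple_self ℚ lam
      have h2 := E2.algebraMap_mem (⟨lam, h1⟩ : E1)
      simpa using h2
    have hζE2 : ζ ∈ E2 := by
      rw [hζdef]
      exact mul_mem hlamE2 (inv_mem hlam'E2)
    set ζ' : E2 := ⟨ζ, hζE2⟩ with hζ'def
    have hcoe : ∀ l : ℕ, ((ζ' ^ l : E2) : K) = ζ ^ l := by
      intro l
      push_cast
      rfl
    have hprim' : IsPrimitiveRoot ζ' k := by
      constructor
      · have : ((ζ' ^ k : E2) : K) = ((1 : E2) : K) := by rw [hcoe]; simp [hprim.pow_eq_one]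
        exact Subtype.ext (by simpa using this)
      · intro l hl
        apply hprim.dvd_of_pow_eq_one
        have := congrArg (Subtype.val) hl
        rw [hcoe] at this
        simpa using this
    haveI : CharZero E2 := charZero_of_injective_algebraMap (algebraMap ℚ E2).injective
    have hcyc : cyclotomic k ℚ = minpoly ℚ ζ' := cyclotomic_eq_minpoly_rat hprim' hk0
    have htot : k.totient ≤ b * b := by
      have h1 := minpoly.natDegree_le (A := ℚ) ζ'
      rw [← hcyc, natDegree_cyclotomic] at h1
      exact h1.trans hfrE2
    have hkdvd : k ∣ n := by
      rw [hndef]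
      exact dvd_factorial_of_totient_le hk0 htot
    exact orderOf_dvd_iff_pow_eq_one.mp hkdvd
  -- local solutions for every value of lam^m
  have hsol : ∀ μ : K, ∃ Pm : K[X], ∀ lam ∈ pK.roots, lam ^ m = μ →
      (X - C lam) ^ r ∣ Pm.comp (X ^ m) - X ^ n := by
    intro μ
    by_cases hex : ∃ lam ∈ pK.roots, lam ^ m = μ
    · obtain ⟨l0, hl0mem, hl0⟩ := hex
      obtain ⟨P, hP⟩ := local_sol (hroot0 l0 hl0mem) hm r n
      refine ⟨P, ?_⟩
      intro lam hlam hlm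
      have hζ := hzeta l0 hl0mem lam hlam (by rw [hl0, hlm])
      set ζ : K := l0 * lam⁻¹ with hζdef
      have hlam0 : lam ≠ 0 := hroot0 lam hlam
      have hζ0 : ζ ≠ 0 := mul_ne_zero (hroot0 l0 hl0mem) (inv_ne_zero hlam0)
      obtain ⟨u, hu⟩ := hP
      have hζlam : ζ * lam = l0 := by
        rw [hζdef]
        rw [mul_assoc, inv_mul_cancel₀ hlam0, mul_one]
      have hcompLHS : (P.comp (X ^ m) - X ^ n).comp (C ζ * X) = P.comp (X ^ m) - X ^ n := by
        rw [sub_comp, comp_assoc]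
        congr 1
        · congr 1
          rw [pow_comp, X_comp, mul_pow, ← C_pow, hζ.1, C_1, one_mul]
        · rw [pow_comp, X_comp, mul_pow, ← C_pow, hζ.2, C_1, one_mul]
      refine ⟨C (ζ ^ r) * u.comp (C ζ * X), ?_⟩
      calc P.comp (X ^ m) - X ^ n
          = (P.comp (X ^ m) - X ^ n).comp (C ζ * X) := hcompLHS.symm
        _ = ((X - C l0) ^ r * u).comp (C ζ * X) := by rw [hu]
        _ = (C ζ * (X - C lam)) ^ r * u.comp (C ζ * X) := by
            rw [mul_comp, pow_comp, sub_comp, X_comp, C_comp, mul_sub, ← C_mul, hζlam]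
        _ = (X - C lam) ^ r * (C (ζ ^ r) * u.comp (C ζ * X)) := by
            rw [mul_pow, ← C_pow]; ring
    · exact ⟨0, fun lam hl hlm => absurd ⟨lam, hl, hlm⟩ hex⟩
  choose Ploc hPloc using hsol
  set S : Finset K := pK.roots.toFinset.image (· ^ m) with hSdef
  obtain ⟨P, hP⟩ := crt_poly r Ploc S
  -- each root power divides
  have hfactors : ∀ lam ∈ pK.roots.toFinset,
      (X - C lam) ^ (pK.roots.count lam) ∣ P.comp (X ^ m) - X ^ n := by
    intro lam hlamT
    have hlam : lam ∈ pK.roots := Multiset.mem_toFinset.mp hlamT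
    have hμS : lam ^ m ∈ S := Finset.mem_image.mpr ⟨lam, hlamT, rfl⟩
    have hcount : pK.roots.count lam ≤ r := by
      rw [count_roots]
      have h1 := natDegree_le_of_dvd (pow_rootMultiplicity_dvd pK lam) hpK0
      rwa [natDegree_pow, natDegree_X_sub_C, mul_one, hrK] at h1
    refine dvd_trans (pow_dvd_pow _ hcount) ?_
    have hsplit : P.comp (X ^ m) - X ^ n
        = (P - Ploc (lam ^ m)).comp (X ^ m) + ((Ploc (lam ^ m)).comp (X ^ m) - X ^ n) := by
      rw [sub_comp]; ring
    rw [hsplit]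
    refine dvd_add ?_ (hPloc (lam ^ m) lam hlam rfl)
    obtain ⟨c, hc⟩ := hP (lam ^ m) hμS
    rw [hc, mul_comp, pow_comp, sub_comp, X_comp, C_comp]
    have hdvd1 : (X - C lam) ∣ (X ^ m - C (lam ^ m)) := by
      apply dvd_iff_isRoot.mpr
      simp [IsRoot]
    exact Dvd.dvd.mul_right (pow_dvd_pow_of_dvd hdvd1 r) _
  have hprodfact : pK = ∏ lam ∈ pK.roots.toFinset, (X - C lam) ^ (pK.roots.count lam) := by
    conv_lhs => rw [hsplits.eq_prod_roots_of_monic hpK]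
    exact Finset.prod_multiset_map_count _ _
  have hdvdK : pK ∣ P.comp (X ^ m) - X ^ n := by
    rw [hprodfact]
    apply Finset.prod_dvd_of_coprime
    · intro a ha b hb hab
      exact ((isCoprime_X_sub_C' hab).pow)
    · exact fun lam hlam => hfactors lam hlam
  -- Galois descent
  haveI : Normal ℚ K := Polynomial.SplittingField.instNormal p
  haveI : IsGalois ℚ K := ⟨⟩
  haveI := AlgEquiv.fintype ℚ K
  set G := K ≃ₐ[ℚ] K
  have hσdvd : ∀ σ : G, pK ∣ (P.map (σ : K →+* K)).comp (X ^ m) - X ^ n := by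
    intro σ
    have h1 := _root_.map_dvd (Polynomial.mapRingHom (σ : K →+* K)) hdvdK
    have h2 : (Polynomial.mapRingHom (σ : K →+* K)) pK = pK := by
      simp only [coe_mapRingHom, hpKdef, Polynomial.map_map]
      congr 1
      ext q
      simp [AlgEquiv.commutes]
    have h3 : (Polynomial.mapRingHom (σ : K →+* K)) (P.comp (X ^ m) - X ^ n)
        = (P.map (σ : K →+* K)).comp (X ^ m) - X ^ n := by
      simp only [coe_mapRingHom, Polynomial.map_sub, Polynomial.map_comp, Polynomial.map_pow,
        Polynomial.map_X]
    rwa [h2, h3] at h1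
  set c : K := ((Fintype.card G : K))⁻¹ with hcdef
  have hcard0 : (Fintype.card G : K) ≠ 0 := Nat.cast_ne_zero.mpr Fintype.card_ne_zero
  set Psum : K[X] := ∑ σ : G, P.map (σ : K →+* K) with hPsumdef
  set P₀ : K[X] := C c * Psum with hP₀def
  have hTdvd : pK ∣ ∑ σ : G, ((P.map (σ : K →+* K)).comp (X ^ m) - X ^ n) :=
    Finset.dvd_sum (fun σ _ => hσdvd σ)
  have hsum_eq : ∑ σ : G, ((P.map (σ : K →+* K)).comp (X ^ m) - X ^ n)
      = Psum.comp (X ^ m) - (Fintype.card G) • (X ^ n : K[X]) := by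
    rw [Finset.sum_sub_distrib, hPsumdef, sum_comp', Finset.sum_const, Finset.card_univ]
  have hCcast : C c * ((Fintype.card G) • (X ^ n : K[X])) = X ^ n := by
    rw [nsmul_eq_mul, ← Polynomial.C_eq_natCast, ← mul_assoc, ← C_mul,
      inv_mul_cancel₀ hcard0, C_1, one_mul]
  have hP₀dvd : pK ∣ P₀.comp (X ^ m) - X ^ n := by
    have heq : P₀.comp (X ^ m) - X ^ n
        = C c * (Psum.comp (X ^ m) - (Fintype.card G) • (X ^ n : K[X])) := by
      rw [hP₀def, mul_comp, C_comp, mul_sub, hCcast]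
    rw [heq, ← hsum_eq]
    exact Dvd.dvd.mul_left hTdvd _
  -- P₀ is fixed by the Galois group
  have hfix : ∀ τ : G, P₀.map (τ : K →+* K) = P₀ := by
    intro τ
    rw [hP₀def, Polynomial.map_mul, map_C]
    have hc : (τ : K →+* K) c = c := by
      rw [hcdef, map_inv₀, map_natCast]
    rw [hc]
    congr 1
    rw [hPsumdef]
    have hms : (∑ σ : G, P.map (σ : K →+* K)).map (τ : K →+* K)
        = ∑ σ : G, (P.map (σ : K →+* K)).map (τ : K →+* K) :=
      _root_.map_sum (Polynomial.mapRingHom (τ : K →+* K)) _ _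
    rw [hms]
    refine Fintype.sum_bijective (fun σ : G => σ.trans τ)
      (Function.bijective_iff_has_inverse.mpr
        ⟨fun σ => σ.trans τ.symm, fun σ => by ext x; simp, fun σ => by ext x; simp⟩)
      _ _ ?_
    intro σ
    rw [Polynomial.map_map]
    congr 1
  -- coefficients are rational
  have hbot : IntermediateField.fixedField (⊤ : Subgroup G) = ⊥ :=
    ((IsGalois.tfae).out 0 1).mp (inferInstance : IsGalois ℚ K)
  have hcoeff : ∀ i : ℕ, P₀.coeff i ∈ Set.range (algebraMap ℚ K) := by
    intro i
    have hmem : P₀.coeff i ∈ IntermediateField.fixedField (⊤ : Subgroup G) := by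
      refine fun g => ?_
      obtain ⟨τ, -⟩ := g
      have h1 := congrArg (fun q : K[X] => q.coeff i) (hfix τ)
      simpa [Polynomial.coeff_map, AlgEquiv.smul_def] using h1
    rw [hbot] at hmem
    exact IntermediateField.mem_bot.mp hmem
  have hlift : ∃ Q : ℚ[X], Q.map (algebraMap ℚ K) = P₀ := by
    rw [← Polynomial.mem_lifts]
    exact (Polynomial.lifts_iff_coeff_lifts _).mpr hcoeff
  obtain ⟨Q, hQ⟩ := hlift
  refine ⟨Q, ?_⟩
  have hmapped : (Q.comp (X ^ m) - X ^ (N0 b)).map (algebraMap ℚ K)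
      = P₀.comp (X ^ m) - X ^ n := by
    rw [Polynomial.map_sub, Polynomial.map_comp, Polynomial.map_pow, Polynomial.map_X,
      Polynomial.map_pow, Polynomial.map_X, hQ, hndef]
  rw [← Polynomial.map_dvd_map (algebraMap ℚ K) (algebraMap ℚ K).injective hmo, hmapped]
  exact hP₀dvd



/-- **Uniform periods of periodic subspaces.** For every `d` there is `n₀ ≥ 1`, depending
only on `d`, such that for every `d`-dimensional `ℚ`-vector space `V`, every linear
automorphism `f` of `V` and every `f`-periodic subspace `W ⊆ V` (i.e. `fⁿ(W) = W` for some
`n ≥ 1`), one has `f^{n₀}(W) = W`. -/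
theorem periodic_subspace_uniform_period (d : ℕ) :
    ∃ n₀ : ℕ, 1 ≤ n₀ ∧
      ∀ (V : Type) [AddCommGroup V] [Module ℚ V] [FiniteDimensional ℚ V],
        Module.finrank ℚ V = d →
        ∀ (f : V ≃ₗ[ℚ] V) (W : Submodule ℚ V),
          (∃ n : ℕ, 1 ≤ n ∧ W.map ((f ^ n : V ≃ₗ[ℚ] V) : V →ₗ[ℚ] V) = W) →
          W.map ((f ^ n₀ : V ≃ₗ[ℚ] V) : V →ₗ[ℚ] V) = W := by
  classical
  refine ⟨N0 (d * d), Nat.factorial_pos _, ?_⟩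
  intro V _ _ _ hdim f W hper
  obtain ⟨n, hn1, hWn⟩ := hper
  rcases subsingleton_or_nontrivial V with hV | hV
  · haveI : Subsingleton (Submodule ℚ V) := (Submodule.subsingleton_iff ℚ).mpr hV
    exact Subsingleton.elim _ _
  · set g : V →ₗ[ℚ] V := (f : V →ₗ[ℚ] V) with hgdef
    have hgint : IsIntegral ℚ g := LinearMap.isIntegral g
    have hmo : (minpoly ℚ g).Monic := minpoly.monic hgint
    have hd1 : 1 ≤ d := by
      rw [← hdim]
      exact Module.finrank_pos
    have hdegle : (minpoly ℚ g).natDegree ≤ d * d := by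
      have h1 : (minpoly ℚ g).natDegree ≤ g.charpoly.natDegree :=
        natDegree_le_of_dvd (LinearMap.minpoly_dvd_charpoly g) g.charpoly_monic.ne_zero
      rw [LinearMap.charpoly_natDegree, hdim] at h1
      calc (minpoly ℚ g).natDegree ≤ d := h1
        _ ≤ d * d := Nat.le_mul_of_pos_left d (by omega)
    have hcoeff0 : (minpoly ℚ g).coeff 0 ≠ 0 := by
      intro hc
      obtain ⟨cfac, hcfac⟩ := X_dvd_iff.mpr hc
      have hmin0 : minpoly ℚ g ≠ 0 := minpoly.ne_zero hgint
      have hcfac0 : cfac ≠ 0 := by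
        intro h0
        rw [h0, mul_zero] at hcfac
        exact hmin0 hcfac
      have hcmon : cfac.Monic := by
        have h2 := hmo
        rw [Monic, hcfac, leadingCoeff_mul, leadingCoeff_X, one_mul] at h2
        exact h2
      have haevc : Polynomial.aeval g cfac = 0 := by
        have h3 := minpoly.aeval ℚ g
        rw [hcfac, map_mul, aeval_X] at h3
        -- h3 : g * aeval g cfac = 0
        ext v
        have h4 : g ((Polynomial.aeval g cfac) v) = 0 := by
          have := congrArg (fun t : V →ₗ[ℚ] V => t v) h3
          simpa [Module.End.mul_apply] using this
        have h5 : f ((Polynomial.aeval g cfac) v) = 0 := h4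
        have := f.injective (by rw [h5, map_zero] : f ((Polynomial.aeval g cfac) v) = f 0)
        simpa using this
      have hle := minpoly.min ℚ g hcmon haevc
      have hdeg : cfac.degree < (minpoly ℚ g).degree := by
        rw [hcfac, degree_mul, degree_X, degree_eq_natDegree hcfac0]
        exact_mod_cast (by omega : cfac.natDegree < 1 + cfac.natDegree)
      exact absurd hle (not_le.mpr hdeg)
    obtain ⟨Q, hQ⟩ := key_dvd (d * d) (minpoly ℚ g) hmo hcoeff0 hdegle hn1
    have haeval0 : Polynomial.aeval g (Q.comp (X ^ n) - X ^ N0 (d * d)) = 0 := by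
      obtain ⟨cc, hcc⟩ := hQ
      rw [hcc, map_mul, minpoly.aeval, zero_mul]
    have heq : g ^ (N0 (d * d)) = Polynomial.aeval (g ^ n) Q := by
      rw [map_sub, Polynomial.aeval_comp] at haeval0
      have h2 : Polynomial.aeval g ((X : ℚ[X]) ^ n) = g ^ n := by
        rw [map_pow, aeval_X]
      have h3 : Polynomial.aeval g ((X : ℚ[X]) ^ N0 (d * d)) = g ^ N0 (d * d) := by
        rw [map_pow, aeval_X]
      rw [h2, h3] at haeval0
      exact (sub_eq_zero.mp haeval0).symm
    have hstep : ∀ w ∈ W, (g ^ n) w ∈ W := by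
      intro w hw
      have hmem : (f ^ n : V ≃ₗ[ℚ] V) w ∈ W := by
        have h6 : ((f ^ n : V ≃ₗ[ℚ] V) : V →ₗ[ℚ] V) w ∈ Submodule.map ((f ^ n : V ≃ₗ[ℚ] V) : V →ₗ[ℚ] V) W :=
          Submodule.mem_map_of_mem hw
        rw [hWn] at h6
        exact h6
      have hfn : (g ^ n) w = (f ^ n : V ≃ₗ[ℚ] V) w := by
        rw [Module.End.pow_apply, LinearEquiv.pow_apply]
        rfl
      rwa [hfn]
    have hpows : ∀ j : ℕ, ∀ w ∈ W, ((g ^ n) ^ j) w ∈ W := by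
      intro j
      induction j with
      | zero => intro w hw; simpa using hw
      | succ j ih =>
          intro w hw
          rw [pow_succ, Module.End.mul_apply]
          exact ih _ (hstep w hw)
    have haeval_mem : ∀ w ∈ W, (Polynomial.aeval (g ^ n) Q) w ∈ W := by
      have hgen : ∀ Q' : ℚ[X], ∀ w ∈ W, (Polynomial.aeval (g ^ n) Q') w ∈ W := by
        intro Q'
        induction Q' using Polynomial.induction_on' with
        | add p q hp hq =>
            intro w hw
            rw [map_add, LinearMap.add_apply]
            exact add_mem (hp w hw) (hq w hw)
        | monomial j a =>
            intro w hw
            rw [Polynomial.aeval_monomial, Module.End.mul_apply, Module.algebraMap_end_apply]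
            exact Submodule.smul_mem _ _ (hpows j w hw)
      exact hgen Q
    apply Submodule.eq_of_le_of_finrank_le
    · rintro x hx
      obtain ⟨w, hw, rfl⟩ := hx
      show ((f ^ N0 (d * d) : V ≃ₗ[ℚ] V) : V →ₗ[ℚ] V) w ∈ W
      have hfn : ((f ^ N0 (d * d) : V ≃ₗ[ℚ] V) : V →ₗ[ℚ] V) w = (g ^ N0 (d * d)) w := by
        rw [Module.End.pow_apply]
        show (f ^ N0 (d * d) : V ≃ₗ[ℚ] V) w = _
        rw [LinearEquiv.pow_apply]
        rfl
      rw [hfn, heq]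
      exact haeval_mem w hw
    · rw [LinearEquiv.finrank_map_eq]
end

section
/- Let K be a complete non-archimedean valued field, r ∈ (ℝ>0)ⁿ, and f, g nonzero elements of the polydisc algebra K{r⁻¹T} of convergent power series on the polydisc of polyradius r. Define ord(f) as the maximum of |I| = i₁ + ⋯ + iₙ over all multi-indices I with |a_I|·r^I equal to the Gauss norm of f. Then ord(fg) = ord(f) + ord(g). -/
open Filter

/-- Membership in the polydisc algebra `K{r⁻¹T}`: the power series `f` has coefficients
with `‖a_I‖ · r^I → 0`. -/
def MemPolydisc {K : Type*} [NormedField K] {n : ℕ} (r : Fin n → ℝ)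
    (f : MvPowerSeries (Fin n) K) : Prop :=
  Tendsto (fun I : Fin n →₀ ℕ => ‖MvPowerSeries.coeff I f‖ * ∏ i, r i ^ I i)
    cofinite (nhds 0)

/-- The Gauss norm `‖∑ a_I T^I‖ = sup_I ‖a_I‖ r^I` on the polydisc algebra. -/
noncomputable def gaussNorm {K : Type*} [NormedField K] {n : ℕ} (r : Fin n → ℝ)
    (f : MvPowerSeries (Fin n) K) : ℝ :=
  ⨆ I : Fin n →₀ ℕ, ‖MvPowerSeries.coeff I f‖ * ∏ i, r i ^ I i

/-- `ord(f)`: the maximal total degree `|I|` among multi-indices `I` with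
`‖a_I‖ r^I = ‖f‖` (Gauss norm). -/
noncomputable def polyOrd {K : Type*} [NormedField K] {n : ℕ} (r : Fin n → ℝ)
    (f : MvPowerSeries (Fin n) K) : ℕ :=
  sSup {d : ℕ | ∃ I : Fin n →₀ ℕ, (I.sum fun _ k => k) = d ∧
    ‖MvPowerSeries.coeff I f‖ * ∏ i, r i ^ I i = gaussNorm r f}

section Aux

variable {K : Type*} [NormedField K] {n : ℕ}

/-- The weight `‖a_I‖ r^I` of a coefficient. -/
noncomputable def polyWt (r : Fin n → ℝ) (f : MvPowerSeries (Fin n) K)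
    (I : Fin n →₀ ℕ) : ℝ :=
  ‖MvPowerSeries.coeff I f‖ * ∏ i, r i ^ I i

lemma gaussNorm_eq_iSup_polyWt (r : Fin n → ℝ) (f : MvPowerSeries (Fin n) K) :
    gaussNorm r f = ⨆ I, polyWt r f I := rfl

lemma polyWt_nonneg (r : Fin n → ℝ) (hr : ∀ i, 0 < r i) (f : MvPowerSeries (Fin n) K)
    (I : Fin n →₀ ℕ) : 0 ≤ polyWt r f I := by
  have : (0:ℝ) < ∏ i, r i ^ I i := Finset.prod_pos fun i _ => pow_pos (hr i) _
  exact mul_nonneg (norm_nonneg _) this.le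

lemma prodr_pos (r : Fin n → ℝ) (hr : ∀ i, 0 < r i) (I : Fin n →₀ ℕ) :
    (0:ℝ) < ∏ i, r i ^ I i := Finset.prod_pos fun i _ => pow_pos (hr i) _

lemma bddAbove_range_polyWt (r : Fin n → ℝ) {f : MvPowerSeries (Fin n) K}
    (hf : MemPolydisc r f) : BddAbove (Set.range (polyWt r f)) := by
  have h1 : ∀ᶠ I in cofinite, polyWt r f I < 1 := hf.eventually_lt_const one_pos
  have hT : {I : Fin n →₀ ℕ | ¬ polyWt r f I < 1}.Finite := by
    simpa using (eventually_cofinite.mp h1)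
  have : Set.range (polyWt r f) ⊆ (polyWt r f '' {I | ¬ polyWt r f I < 1}) ∪ Set.Iic 1 := by
    rintro _ ⟨I, rfl⟩
    by_cases h : polyWt r f I < 1
    · exact Or.inr h.le
    · exact Or.inl ⟨I, h, rfl⟩
  exact ((hT.image _).bddAbove.union bddAbove_Iic).mono this

lemma polyWt_le_gaussNorm (r : Fin n → ℝ) {f : MvPowerSeries (Fin n) K}
    (hf : MemPolydisc r f) (I : Fin n →₀ ℕ) : polyWt r f I ≤ gaussNorm r f :=
  le_ciSup (bddAbove_range_polyWt r hf) I

lemma gauss_attained (r : Fin n → ℝ) (hr : ∀ i, 0 < r i) {f : MvPowerSeries (Fin n) K}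
    (hf0 : f ≠ 0) (hf : MemPolydisc r f) :
    (∃ I, polyWt r f I = gaussNorm r f) ∧ 0 < gaussNorm r f ∧
      {I | polyWt r f I = gaussNorm r f}.Finite := by
  obtain ⟨I₀, hI₀⟩ : ∃ I, MvPowerSeries.coeff I f ≠ 0 := by
    by_contra h
    push_neg at h
    exact hf0 (MvPowerSeries.ext fun I => by simpa using h I)
  have hε : 0 < polyWt r f I₀ :=
    mul_pos (norm_pos_iff.mpr hI₀) (prodr_pos r hr I₀)
  set ε := polyWt r f I₀ with hεdef
  have h1 : ∀ᶠ I in cofinite, polyWt r f I < ε := hf.eventually_lt_const hε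
  have hT : {I : Fin n →₀ ℕ | ¬ polyWt r f I < ε}.Finite := eventually_cofinite.mp h1
  have hI₀T : I₀ ∈ hT.toFinset := by
    simp only [Set.Finite.mem_toFinset, Set.mem_setOf_eq]
    exact lt_irrefl ε
  obtain ⟨I₁, hI₁mem, hI₁max⟩ :=
    hT.toFinset.exists_max_image (polyWt r f) ⟨I₀, hI₀T⟩
  have hub : ∀ I, polyWt r f I ≤ polyWt r f I₁ := by
    intro I
    by_cases h : polyWt r f I < ε
    · have : ε ≤ polyWt r f I₁ := hI₁max I₀ hI₀T
      linarith
    · exact hI₁max I (by simpa [Set.Finite.mem_toFinset] using h)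
  have hgauss : gaussNorm r f = polyWt r f I₁ := by
    rw [gaussNorm_eq_iSup_polyWt]
    exact le_antisymm (ciSup_le hub) (le_ciSup (bddAbove_range_polyWt r hf) I₁)
  have hεle : ε ≤ gaussNorm r f := hgauss ▸ hI₁max I₀ hI₀T
  refine ⟨⟨I₁, hgauss.symm⟩, lt_of_lt_of_le hε hεle, ?_⟩
  apply hT.subset
  intro I hI
  simp only [Set.mem_setOf_eq] at hI ⊢
  rw [hI]
  exact not_lt.mpr hεle

lemma polyOrd_eq_of (r : Fin n → ℝ) (f : MvPowerSeries (Fin n) K) {d : ℕ}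
    (hex : ∃ I : Fin n →₀ ℕ, (I.sum fun _ k => k) = d ∧ polyWt r f I = gaussNorm r f)
    (hub : ∀ I : Fin n →₀ ℕ, polyWt r f I = gaussNorm r f → (I.sum fun _ k => k) ≤ d) :
    polyOrd r f = d := by
  obtain ⟨I, hId, hIw⟩ := hex
  have hmem : d ∈ {d : ℕ | ∃ I : Fin n →₀ ℕ, (I.sum fun _ k => k) = d ∧
      ‖MvPowerSeries.coeff I f‖ * ∏ i, r i ^ I i = gaussNorm r f} := ⟨I, hId, hIw⟩
  have hbdd : BddAbove {d : ℕ | ∃ I : Fin n →₀ ℕ, (I.sum fun _ k => k) = d ∧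
      ‖MvPowerSeries.coeff I f‖ * ∏ i, r i ^ I i = gaussNorm r f} := by
    refine ⟨d, ?_⟩
    rintro b ⟨J, hJd, hJw⟩
    exact hJd ▸ hub J hJw
  exact le_antisymm (csSup_le ⟨d, hmem⟩ (by rintro b ⟨J, hJd, hJw⟩; exact hJd ▸ hub J hJw))
    (le_csSup hbdd hmem)

lemma mul_lt_mul_aux {a b A B : ℝ} (ha : 0 ≤ a) (hb : 0 ≤ b) (hA : 0 < A) (hB : 0 < B)
    (haA : a ≤ A) (hbB : b ≤ B) (h : a < A ∨ b < B) : a * b < A * B := by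
  rcases h with h | h
  · calc a * b ≤ a * B := mul_le_mul_of_nonneg_left hbB ha
      _ < A * B := (mul_lt_mul_iff_left₀ hB).mpr h
  · calc a * b ≤ A * b := mul_le_mul_of_nonneg_right haA hb
      _ < A * B := (mul_lt_mul_iff_right₀ hA).mpr h

end Aux

/-- For nonzero elements `f, g` of the polydisc algebra `K{r⁻¹T}` over a complete
non-archimedean valued field, `ord(fg) = ord(f) + ord(g)`. -/
theorem polyOrd_mul {K : Type*} [NormedField K] [IsUltrametricDist K] [CompleteSpace K]
    {n : ℕ} (r : Fin n → ℝ) (hr : ∀ i, 0 < r i) (f g : MvPowerSeries (Fin n) K)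
    (hf0 : f ≠ 0) (hg0 : g ≠ 0) (hf : MemPolydisc r f) (hg : MemPolydisc r g) :
    polyOrd r (f * g) = polyOrd r f + polyOrd r g := by
  classical
  set deg : (Fin n →₀ ℕ) → ℕ := fun I => I.sum fun _ k => k with hdeg_def
  have deg_add : ∀ a b : Fin n →₀ ℕ, deg (a + b) = deg a + deg b := by
    intro a b
    exact Finsupp.sum_add_index' (fun _ => rfl) (fun _ _ _ => rfl)
  set mf := gaussNorm r f with hmf
  set mg := gaussNorm r g with hmg
  obtain ⟨⟨If, hIf⟩, hmfpos, hSf⟩ := gauss_attained r hr hf0 hf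
  obtain ⟨⟨Jg, hJg⟩, hmgpos, hSg⟩ := gauss_attained r hr hg0 hg
  have hub_f : ∀ I, polyWt r f I ≤ mf := polyWt_le_gaussNorm r hf
  have hub_g : ∀ J, polyWt r g J ≤ mg := polyWt_le_gaussNorm r hg
  set d := polyOrd r f with hd
  set e := polyOrd r g with he
  -- characterize d and e
  have hDf : ∃ I, deg I = d ∧ polyWt r f I = mf := by
    have hne : {d : ℕ | ∃ I : Fin n →₀ ℕ, (I.sum fun _ k => k) = d ∧
        ‖MvPowerSeries.coeff I f‖ * ∏ i, r i ^ I i = gaussNorm r f}.Nonempty :=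
      ⟨deg If, If, rfl, hIf⟩
    have hbdd : BddAbove {d : ℕ | ∃ I : Fin n →₀ ℕ, (I.sum fun _ k => k) = d ∧
        ‖MvPowerSeries.coeff I f‖ * ∏ i, r i ^ I i = gaussNorm r f} := by
      have : {d : ℕ | ∃ I : Fin n →₀ ℕ, (I.sum fun _ k => k) = d ∧
          ‖MvPowerSeries.coeff I f‖ * ∏ i, r i ^ I i = gaussNorm r f} ⊆
          deg '' {I | polyWt r f I = gaussNorm r f} := by
        rintro b ⟨I, hI1, hI2⟩
        exact ⟨I, hI2, hI1⟩
      exact ((hSf.image deg).bddAbove).mono this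
    exact Nat.sSup_mem hne hbdd
  have hDg : ∃ J, deg J = e ∧ polyWt r g J = mg := by
    have hne : {d : ℕ | ∃ I : Fin n →₀ ℕ, (I.sum fun _ k => k) = d ∧
        ‖MvPowerSeries.coeff I g‖ * ∏ i, r i ^ I i = gaussNorm r g}.Nonempty :=
      ⟨deg Jg, Jg, rfl, hJg⟩
    have hbdd : BddAbove {d : ℕ | ∃ I : Fin n →₀ ℕ, (I.sum fun _ k => k) = d ∧
        ‖MvPowerSeries.coeff I g‖ * ∏ i, r i ^ I i = gaussNorm r g} := by
      have : {d : ℕ | ∃ I : Fin n →₀ ℕ, (I.sum fun _ k => k) = d ∧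
          ‖MvPowerSeries.coeff I g‖ * ∏ i, r i ^ I i = gaussNorm r g} ⊆
          deg '' {J | polyWt r g J = gaussNorm r g} := by
        rintro b ⟨I, hI1, hI2⟩
        exact ⟨I, hI2, hI1⟩
      exact ((hSg.image deg).bddAbove).mono this
    exact Nat.sSup_mem hne hbdd
  have hd_ub : ∀ I, polyWt r f I = mf → deg I ≤ d := by
    intro I hI
    have hbdd : BddAbove {d : ℕ | ∃ I : Fin n →₀ ℕ, (I.sum fun _ k => k) = d ∧
        ‖MvPowerSeries.coeff I f‖ * ∏ i, r i ^ I i = gaussNorm r f} := by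
      have : {d : ℕ | ∃ I : Fin n →₀ ℕ, (I.sum fun _ k => k) = d ∧
          ‖MvPowerSeries.coeff I f‖ * ∏ i, r i ^ I i = gaussNorm r f} ⊆
          deg '' {I | polyWt r f I = gaussNorm r f} := by
        rintro b ⟨I, hI1, hI2⟩
        exact ⟨I, hI2, hI1⟩
      exact ((hSf.image deg).bddAbove).mono this
    exact le_csSup hbdd ⟨I, rfl, hI⟩
  have he_ub : ∀ J, polyWt r g J = mg → deg J ≤ e := by
    intro J hJ
    have hbdd : BddAbove {d : ℕ | ∃ I : Fin n →₀ ℕ, (I.sum fun _ k => k) = d ∧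
        ‖MvPowerSeries.coeff I g‖ * ∏ i, r i ^ I i = gaussNorm r g} := by
      have : {d : ℕ | ∃ I : Fin n →₀ ℕ, (I.sum fun _ k => k) = d ∧
          ‖MvPowerSeries.coeff I g‖ * ∏ i, r i ^ I i = gaussNorm r g} ⊆
          deg '' {J | polyWt r g J = gaussNorm r g} := by
        rintro b ⟨I, hI1, hI2⟩
        exact ⟨I, hI2, hI1⟩
      exact ((hSg.image deg).bddAbove).mono this
    exact le_csSup hbdd ⟨J, rfl, hJ⟩
  -- select lex-maximal maximizers of maximal degree
  obtain ⟨I₀, hI₀d, hI₀w⟩ := hDf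
  obtain ⟨J₀, hJ₀e, hJ₀w⟩ := hDg
  set Sfd : Finset (Fin n →₀ ℕ) :=
    hSf.toFinset.filter (fun I => deg I = d) with hSfd
  set Sge : Finset (Fin n →₀ ℕ) :=
    hSg.toFinset.filter (fun J => deg J = e) with hSge
  have hI₀mem : I₀ ∈ Sfd := by
    simp only [hSfd, Finset.mem_filter, Set.Finite.mem_toFinset, Set.mem_setOf_eq]
    exact ⟨hI₀w, hI₀d⟩
  have hJ₀mem : J₀ ∈ Sge := by
    simp only [hSge, Finset.mem_filter, Set.Finite.mem_toFinset, Set.mem_setOf_eq]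
    exact ⟨hJ₀w, hJ₀e⟩
  obtain ⟨I, hImem, hImax⟩ := Sfd.exists_max_image (fun I => toLex I) ⟨I₀, hI₀mem⟩
  obtain ⟨J, hJmem, hJmax⟩ := Sge.exists_max_image (fun J => toLex J) ⟨J₀, hJ₀mem⟩
  have hIw : polyWt r f I = mf := by
    have := hImem
    simp only [hSfd, Finset.mem_filter, Set.Finite.mem_toFinset, Set.mem_setOf_eq] at this
    exact this.1
  have hIdeg : deg I = d := by
    have := hImem
    simp only [hSfd, Finset.mem_filter, Set.Finite.mem_toFinset, Set.mem_setOf_eq] at this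
    exact this.2
  have hJw : polyWt r g J = mg := by
    have := hJmem
    simp only [hSge, Finset.mem_filter, Set.Finite.mem_toFinset, Set.mem_setOf_eq] at this
    exact this.1
  have hJdeg : deg J = e := by
    have := hJmem
    simp only [hSge, Finset.mem_filter, Set.Finite.mem_toFinset, Set.mem_setOf_eq] at this
    exact this.2
  -- uniqueness of the top pair
  have key : ∀ p : (Fin n →₀ ℕ) × (Fin n →₀ ℕ), p.1 + p.2 = I + J →
      polyWt r f p.1 = mf → polyWt r g p.2 = mg → p = (I, J) := by
    rintro ⟨a, b⟩ hsum h1 h2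
    simp only at hsum h1 h2 ⊢
    have hda : deg a ≤ d := hd_ub a h1
    have hdb : deg b ≤ e := he_ub b h2
    have hdsum : deg a + deg b = d + e := by
      rw [← deg_add, hsum, deg_add, hIdeg, hJdeg]
    have hda' : deg a = d := by omega
    have hdb' : deg b = e := by omega
    have hamem : a ∈ Sfd := by
      simp only [hSfd, Finset.mem_filter, Set.Finite.mem_toFinset, Set.mem_setOf_eq]
      exact ⟨h1, hda'⟩
    have hbmem : b ∈ Sge := by
      simp only [hSge, Finset.mem_filter, Set.Finite.mem_toFinset, Set.mem_setOf_eq]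
      exact ⟨h2, hdb'⟩
    have hla : toLex a ≤ toLex I := hImax a hamem
    have hlb : toLex b ≤ toLex J := hJmax b hbmem
    have hsum' : toLex a + toLex b = toLex I + toLex J := by
      rw [← toLex_add, hsum, toLex_add]
    have haI : toLex a = toLex I := by
      refine le_antisymm hla ?_
      have : toLex I + toLex J ≤ toLex a + toLex J := by
        rw [← hsum']
        exact add_le_add le_rfl hlb
      exact le_of_add_le_add_right this
    have haI' : a = I := toLex.injective haI
    subst haI'
    have : b = J := by
      have := hsum
      exact add_left_cancel this
    simp [this]
  -- product splitting of the radius factor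
  have hPsplit : ∀ (Kk : Fin n →₀ ℕ) (p : (Fin n →₀ ℕ) × (Fin n →₀ ℕ)),
      p ∈ Finset.HasAntidiagonal.antidiagonal Kk →
      (∏ i, r i ^ Kk i) = (∏ i, r i ^ p.1 i) * (∏ i, r i ^ p.2 i) := by
    intro Kk p hp
    rw [Finset.HasAntidiagonal.mem_antidiagonal] at hp
    rw [← Finset.prod_mul_distrib]
    refine Finset.prod_congr rfl fun i _ => ?_
    rw [← pow_add]
    congr 1
    rw [← hp]
    simp [Finsupp.add_apply]
  have hterm : ∀ (Kk : Fin n →₀ ℕ) (p : (Fin n →₀ ℕ) × (Fin n →₀ ℕ)),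
      p ∈ Finset.HasAntidiagonal.antidiagonal Kk →
      ‖MvPowerSeries.coeff p.1 f * MvPowerSeries.coeff p.2 g‖ * (∏ i, r i ^ Kk i)
        = polyWt r f p.1 * polyWt r g p.2 := by
    intro Kk p hp
    rw [norm_mul, hPsplit Kk p hp]
    simp only [polyWt]
    ring
  have hP_pos : ∀ Kk : Fin n →₀ ℕ, (0:ℝ) < ∏ i, r i ^ Kk i := prodr_pos r hr
  -- global upper bound for the product series
  have hle : ∀ Kk : Fin n →₀ ℕ, polyWt r (f * g) Kk ≤ mf * mg := by
    intro Kk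
    show ‖MvPowerSeries.coeff Kk (f * g)‖ * (∏ i, r i ^ Kk i) ≤ mf * mg
    rw [MvPowerSeries.coeff_mul]
    rw [← le_div_iff₀ (hP_pos Kk)]
    refine IsUltrametricDist.norm_sum_le_of_forall_le_of_nonneg
      (div_nonneg (mul_nonneg hmfpos.le hmgpos.le) (hP_pos Kk).le) ?_
    intro p hp
    rw [le_div_iff₀ (hP_pos Kk), hterm Kk p hp]
    exact mul_le_mul (hub_f p.1) (hub_g p.2) (polyWt_nonneg r hr g p.2) hmfpos.le
  -- strict upper bound when all terms are strictly small
  have hlt : ∀ Kk : Fin n →₀ ℕ,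
      (∀ p ∈ Finset.HasAntidiagonal.antidiagonal Kk, polyWt r f p.1 * polyWt r g p.2 < mf * mg) →
      polyWt r (f * g) Kk < mf * mg := by
    intro Kk hall
    show ‖MvPowerSeries.coeff Kk (f * g)‖ * (∏ i, r i ^ Kk i) < mf * mg
    rw [MvPowerSeries.coeff_mul]
    have hne : (Finset.HasAntidiagonal.antidiagonal Kk).Nonempty := ⟨(0, Kk), by simp⟩
    obtain ⟨p, hpmem, hple⟩ := IsUltrametricDist.exists_norm_finset_sum_le_of_nonempty hne
      (fun p : (Fin n →₀ ℕ) × (Fin n →₀ ℕ) =>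
        MvPowerSeries.coeff p.1 f * MvPowerSeries.coeff p.2 g)
    calc ‖∑ q ∈ Finset.HasAntidiagonal.antidiagonal Kk,
          MvPowerSeries.coeff q.1 f * MvPowerSeries.coeff q.2 g‖ * (∏ i, r i ^ Kk i)
        ≤ ‖MvPowerSeries.coeff p.1 f * MvPowerSeries.coeff p.2 g‖ * (∏ i, r i ^ Kk i) :=
          mul_le_mul_of_nonneg_right hple (hP_pos Kk).le
      _ = polyWt r f p.1 * polyWt r g p.2 := hterm Kk p hpmem
      _ < mf * mg := hall p hpmem
  -- the weight of f*g at I+J equals mf*mg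
  have hIJmem : (I, J) ∈ Finset.HasAntidiagonal.antidiagonal (I + J) := by
    rw [Finset.HasAntidiagonal.mem_antidiagonal]
  have hanorm : ‖MvPowerSeries.coeff I f * MvPowerSeries.coeff J g‖
      * (∏ i, r i ^ (I + J) i) = mf * mg := by
    rw [hterm (I + J) (I, J) hIJmem]
    simp only
    rw [hIw, hJw]
  have hapos : 0 < ‖MvPowerSeries.coeff I f * MvPowerSeries.coeff J g‖ := by
    have h1 := hP_pos (I + J)
    nlinarith [mul_pos hmfpos hmgpos]
  have hIJ : polyWt r (f * g) (I + J) = mf * mg := by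
    show ‖MvPowerSeries.coeff (I + J) (f * g)‖ * (∏ i, r i ^ (I + J) i) = mf * mg
    rw [MvPowerSeries.coeff_mul]
    rw [← Finset.add_sum_erase _ _ hIJmem]
    have hrest : ‖∑ p ∈ (Finset.HasAntidiagonal.antidiagonal (I + J)).erase (I, J),
        MvPowerSeries.coeff p.1 f * MvPowerSeries.coeff p.2 g‖
        < ‖MvPowerSeries.coeff I f * MvPowerSeries.coeff J g‖ := by
      rcases ((Finset.HasAntidiagonal.antidiagonal (I + J)).erase (I, J)).eq_empty_or_nonempty with hemp | hne
      · rw [hemp]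
        simpa using hapos
      · obtain ⟨p, hpmem, hple⟩ := IsUltrametricDist.exists_norm_finset_sum_le_of_nonempty hne
          (fun p : (Fin n →₀ ℕ) × (Fin n →₀ ℕ) =>
            MvPowerSeries.coeff p.1 f * MvPowerSeries.coeff p.2 g)
        refine lt_of_le_of_lt hple ?_
        have hpne : p ≠ (I, J) := Finset.ne_of_mem_erase hpmem
        have hpanti : p ∈ Finset.HasAntidiagonal.antidiagonal (I + J) := Finset.mem_of_mem_erase hpmem
        have hpsum : p.1 + p.2 = I + J := Finset.HasAntidiagonal.mem_antidiagonal.mp hpanti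
        have hstrict : polyWt r f p.1 * polyWt r g p.2 < mf * mg := by
          by_cases h1 : polyWt r f p.1 = mf
          · have h2 : polyWt r g p.2 ≠ mg := by
              intro h2
              exact hpne (key p hpsum h1 h2)
            exact mul_lt_mul_aux (polyWt_nonneg r hr f p.1) (polyWt_nonneg r hr g p.2)
              hmfpos hmgpos (hub_f p.1) (hub_g p.2)
              (Or.inr (lt_of_le_of_ne (hub_g p.2) h2))
          · exact mul_lt_mul_aux (polyWt_nonneg r hr f p.1) (polyWt_nonneg r hr g p.2)
              hmfpos hmgpos (hub_f p.1) (hub_g p.2)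
              (Or.inl (lt_of_le_of_ne (hub_f p.1) h1))
        have := hterm (I + J) p hpanti
        have hlt' : ‖MvPowerSeries.coeff p.1 f * MvPowerSeries.coeff p.2 g‖
            * (∏ i, r i ^ (I + J) i)
            < ‖MvPowerSeries.coeff I f * MvPowerSeries.coeff J g‖
            * (∏ i, r i ^ (I + J) i) := by
          rw [this, hanorm]
          exact hstrict
        exact lt_of_mul_lt_mul_right hlt' (hP_pos (I + J)).le
    have hadd : ‖MvPowerSeries.coeff I f * MvPowerSeries.coeff J g +
        ∑ p ∈ (Finset.HasAntidiagonal.antidiagonal (I + J)).erase (I, J),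
          MvPowerSeries.coeff p.1 f * MvPowerSeries.coeff p.2 g‖
        = ‖MvPowerSeries.coeff I f * MvPowerSeries.coeff J g‖ := by
      rw [IsUltrametricDist.norm_add_eq_max_of_norm_ne_norm (ne_of_gt hrest)]
      exact max_eq_left hrest.le
    rw [hadd, hanorm]
  -- the Gauss norm of f*g
  have hbdd_fg : BddAbove (Set.range (polyWt r (f * g))) := by
    refine ⟨mf * mg, ?_⟩
    rintro _ ⟨Kk, rfl⟩
    exact hle Kk
  have hgauss_fg : gaussNorm r (f * g) = mf * mg := by
    rw [gaussNorm_eq_iSup_polyWt]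
    refine le_antisymm (ciSup_le hle) ?_
    rw [← hIJ]
    exact le_ciSup hbdd_fg (I + J)
  -- degree bound for maximizers of f*g
  have hub_fg : ∀ Kk : Fin n →₀ ℕ, polyWt r (f * g) Kk = gaussNorm r (f * g) →
      deg Kk ≤ d + e := by
    intro Kk hK
    by_contra hcon
    push_neg at hcon
    have hKlt : polyWt r (f * g) Kk < mf * mg := by
      refine hlt Kk ?_
      intro p hp
      have hpsum : p.1 + p.2 = Kk := Finset.HasAntidiagonal.mem_antidiagonal.mp hp
      have hdsum : deg p.1 + deg p.2 = deg Kk := by rw [← deg_add, hpsum]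
      have hcase : d < deg p.1 ∨ e < deg p.2 := by omega
      rcases hcase with hc | hc
      · have h1 : polyWt r f p.1 ≠ mf := fun h => absurd (hd_ub p.1 h) (by omega)
        exact mul_lt_mul_aux (polyWt_nonneg r hr f p.1) (polyWt_nonneg r hr g p.2)
          hmfpos hmgpos (hub_f p.1) (hub_g p.2)
          (Or.inl (lt_of_le_of_ne (hub_f p.1) h1))
      · have h2 : polyWt r g p.2 ≠ mg := fun h => absurd (he_ub p.2 h) (by omega)
        exact mul_lt_mul_aux (polyWt_nonneg r hr f p.1) (polyWt_nonneg r hr g p.2)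
          hmfpos hmgpos (hub_f p.1) (hub_g p.2)
          (Or.inr (lt_of_le_of_ne (hub_g p.2) h2))
    rw [hK, hgauss_fg] at hKlt
    exact lt_irrefl _ hKlt
  -- conclude
  refine polyOrd_eq_of r (f * g) ⟨I + J, ?_, ?_⟩ hub_fg
  · rw [show ((I + J).sum fun _ k => k) = deg (I + J) from rfl, deg_add, hIdeg, hJdeg]
  · rw [hIJ, hgauss_fg]
end

section
/- Let K be a complete non-archimedean valued field, r ∈ (ℝ>0)ⁿ, and f ∈ K{r⁻¹T} a nonzero element of the polydisc algebra. Then f is a unit in K{r⁻¹T} if and only if ord(f) = 0, where ord(f) is the maximal total degree |I| among multi-indices I achieving |a_I| r^I = ‖f‖ (Gauss norm). -/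
open Filter

open Filter

section Aux

variable {K : Type*} [NormedField K] {n : ℕ}

/-- The term function `I ↦ ‖a_I‖ r^I`. -/
noncomputable def polyTerm (r : Fin n → ℝ) (f : MvPowerSeries (Fin n) K)
    (I : Fin n →₀ ℕ) : ℝ :=
  ‖MvPowerSeries.coeff I f‖ * ∏ i, r i ^ I i

lemma polyWeight_pos {r : Fin n → ℝ} (hr : ∀ i, 0 < r i) (I : Fin n →₀ ℕ) :
    0 < ∏ i, r i ^ I i :=
  Finset.prod_pos fun i _ => pow_pos (hr i) _

lemma polyTerm_nonneg {r : Fin n → ℝ} (hr : ∀ i, 0 < r i) (f : MvPowerSeries (Fin n) K)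
    (I : Fin n →₀ ℕ) : 0 ≤ polyTerm r f I :=
  mul_nonneg (norm_nonneg _) (polyWeight_pos hr I).le

lemma gaussNorm_eq (r : Fin n → ℝ) (f : MvPowerSeries (Fin n) K) :
    gaussNorm r f = ⨆ I, polyTerm r f I := rfl

lemma polyWeight_add {r : Fin n → ℝ} {I J N : Fin n →₀ ℕ} (h : I + J = N) :
    (∏ i, r i ^ N i) = (∏ i, r i ^ I i) * ∏ i, r i ^ J i := by
  rw [← Finset.prod_mul_distrib]
  refine Finset.prod_congr rfl fun i _ => ?_
  rw [← pow_add, ← Finsupp.add_apply, h]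

lemma polyBddAbove {r : Fin n → ℝ} {f : MvPowerSeries (Fin n) K} (hf : MemPolydisc r f) :
    BddAbove (Set.range (polyTerm r f)) := by
  have h1 : {I : Fin n →₀ ℕ | ¬ polyTerm r f I < 1}.Finite := by
    have := hf.eventually (gt_mem_nhds (one_pos : (0:ℝ) < 1))
    simpa [Filter.eventually_cofinite, polyTerm] using this
  obtain ⟨M, hM⟩ := (h1.image (polyTerm r f)).bddAbove
  refine ⟨max M 1, ?_⟩
  rintro x ⟨I, rfl⟩
  by_cases hI : polyTerm r f I < 1
  · exact le_max_of_le_right hI.le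
  · exact le_max_of_le_left (hM ⟨I, hI, rfl⟩)

lemma polyTerm_le_gaussNorm {r : Fin n → ℝ} {f : MvPowerSeries (Fin n) K}
    (hf : MemPolydisc r f) (I : Fin n →₀ ℕ) : polyTerm r f I ≤ gaussNorm r f :=
  le_ciSup (polyBddAbove hf) I

lemma gaussNorm_pos {r : Fin n → ℝ} (hr : ∀ i, 0 < r i) {f : MvPowerSeries (Fin n) K}
    (hf0 : f ≠ 0) (hf : MemPolydisc r f) : 0 < gaussNorm r f := by
  have : ∃ I, MvPowerSeries.coeff I f ≠ 0 := by
    by_contra h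
    push_neg at h
    exact hf0 (MvPowerSeries.ext fun I => by simp [h I])
  obtain ⟨I, hI⟩ := this
  have : 0 < polyTerm r f I :=
    mul_pos (norm_pos_iff.2 hI) (polyWeight_pos hr I)
  exact this.trans_le (polyTerm_le_gaussNorm hf I)

lemma polyAchieve_finite {r : Fin n → ℝ} (hr : ∀ i, 0 < r i) {f : MvPowerSeries (Fin n) K}
    (hf0 : f ≠ 0) (hf : MemPolydisc r f) :
    {I : Fin n →₀ ℕ | polyTerm r f I = gaussNorm r f}.Finite := by
  have hc := gaussNorm_pos hr hf0 hf
  have h1 : {I : Fin n →₀ ℕ | ¬ polyTerm r f I < gaussNorm r f / 2}.Finite := by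
    have := hf.eventually (gt_mem_nhds (half_pos hc))
    simpa [Filter.eventually_cofinite, polyTerm] using this
  refine h1.subset fun I hI => ?_
  simp only [Set.mem_setOf_eq] at hI ⊢
  rw [hI]
  exact not_lt.2 (half_le_self hc.le)

lemma polyAttained {r : Fin n → ℝ} (hr : ∀ i, 0 < r i) {f : MvPowerSeries (Fin n) K}
    (hf0 : f ≠ 0) (hf : MemPolydisc r f) :
    ∃ I, polyTerm r f I = gaussNorm r f := by
  have hc := gaussNorm_pos hr hf0 hf
  have h1 : {I : Fin n →₀ ℕ | ¬ polyTerm r f I < gaussNorm r f / 2}.Finite := by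
    have := hf.eventually (gt_mem_nhds (half_pos hc))
    simpa [Filter.eventually_cofinite, polyTerm] using this
  have hne : ∃ I, gaussNorm r f / 2 < polyTerm r f I := by
    have h2 : gaussNorm r f / 2 < ⨆ I, polyTerm r f I := by
      rw [← gaussNorm_eq]; exact half_lt_self hc
    exact exists_lt_of_lt_ciSup h2
  obtain ⟨I0, hI0⟩ := hne
  have hI0' : I0 ∈ h1.toFinset := by simp [not_lt.2 hI0.le, not_lt, hI0.le]
  obtain ⟨I1, hI1mem, hI1max⟩ := h1.toFinset.exists_max_image (polyTerm r f) ⟨I0, hI0'⟩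
  refine ⟨I1, le_antisymm (polyTerm_le_gaussNorm hf I1) ?_⟩
  rw [gaussNorm_eq]
  refine ciSup_le fun J => ?_
  by_cases hJ : polyTerm r f J < gaussNorm r f / 2
  · exact hJ.le.trans (hI0.le.trans (hI1max I0 hI0'))
  · exact hI1max J (by simpa [Set.Finite.mem_toFinset] using hJ)

/-- Key lemma for the forward direction: if `f·g = 1` in the polydisc algebra, then the
Gauss norm of `f` is only achieved at the index `0`. -/
lemma polyAchieve_eq_zero [IsUltrametricDist K] {r : Fin n → ℝ} (hr : ∀ i, 0 < r i)
    {f g : MvPowerSeries (Fin n) K} (hf : MemPolydisc r f) (hg : MemPolydisc r g)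
    (hf0 : f ≠ 0) (hfg : f * g = 1) :
    ∀ I, polyTerm r f I = gaussNorm r f → I = 0 := by
  classical
  intro I₀ hach
  by_contra hne0
  have hg0 : g ≠ 0 := by rintro rfl; simp at hfg
  set c := gaussNorm r f with hc
  set d := gaussNorm r g with hd
  have hcpos : 0 < c := gaussNorm_pos hr hf0 hf
  have hdpos : 0 < d := gaussNorm_pos hr hg0 hg
  have hAf := polyAchieve_finite hr hf0 hf
  have hAg := polyAchieve_finite hr hg0 hg
  obtain ⟨Istar, hImem, hImax⟩ :=
    hAf.toFinset.exists_max_image (fun I => toLex I)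
      ⟨I₀, by simpa [Set.Finite.mem_toFinset] using hach⟩
  obtain ⟨J1, hJ1⟩ := polyAttained hr hg0 hg
  obtain ⟨Jstar, hJmem, hJmax⟩ :=
    hAg.toFinset.exists_max_image (fun I => toLex I)
      ⟨J1, by simpa [Set.Finite.mem_toFinset] using hJ1⟩
  have hIach : polyTerm r f Istar = c := by
    simpa [Set.Finite.mem_toFinset] using hImem
  have hJach : polyTerm r g Jstar = d := by
    simpa [Set.Finite.mem_toFinset] using hJmem
  -- `Istar ≠ 0`
  have hIne : Istar ≠ 0 := by
    intro h
    apply hne0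
    have h1 : toLex I₀ ≤ toLex Istar :=
      hImax I₀ (by simpa [Set.Finite.mem_toFinset] using hach)
    rw [h] at h1
    have h2 : toLex (0 : Fin n →₀ ℕ) ≤ toLex I₀ := Finsupp.toLex_monotone (zero_le : (0 : Fin n →₀ ℕ) ≤ I₀)
    exact toLex.injective (le_antisymm h1 h2)
  set N := Istar + Jstar with hN
  have hNne : N ≠ 0 := by
    intro h
    apply hIne
    have h' : Istar + Jstar = 0 := h
    ext i
    have h2 := DFunLike.congr_fun h' i
    simp only [Finsupp.add_apply, Finsupp.coe_zero, Pi.zero_apply] at h2 ⊢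
    omega
  have hco : MvPowerSeries.coeff N (f * g) = 0 := by
    rw [hfg, MvPowerSeries.coeff_one, if_neg hNne]
  rw [MvPowerSeries.coeff_mul] at hco
  set T : (Fin n →₀ ℕ) × (Fin n →₀ ℕ) → K :=
    fun p => MvPowerSeries.coeff p.1 f * MvPowerSeries.coeff p.2 g with hT
  set pstar : (Fin n →₀ ℕ) × (Fin n →₀ ℕ) := (Istar, Jstar) with hpstar
  have hpmem : pstar ∈ Finset.HasAntidiagonal.antidiagonal N := by
    simp [Finset.HasAntidiagonal.mem_antidiagonal, hpstar, hN]
  have hwN : (∏ i, r i ^ N i) = (∏ i, r i ^ Istar i) * ∏ i, r i ^ Jstar i :=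
    polyWeight_add rfl
  have hwNpos : 0 < ∏ i, r i ^ N i := polyWeight_pos hr N
  have hTstar : ‖T pstar‖ * (∏ i, r i ^ N i) = c * d := by
    rw [hT]
    simp only [hpstar, norm_mul]
    rw [hwN, ← hIach, ← hJach, polyTerm, polyTerm]
    ring
  have hTstarpos : 0 < ‖T pstar‖ := by
    by_contra h
    push_neg at h
    nlinarith [mul_pos hcpos hdpos, hwNpos, hTstar]
  -- every other term in the antidiagonal is strictly smaller in norm
  have hstrict : ∀ p ∈ (Finset.HasAntidiagonal.antidiagonal N).erase pstar, ‖T p‖ < ‖T pstar‖ := by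
    intro p hp
    obtain ⟨hpne, hpmem'⟩ := Finset.mem_erase.1 hp
    have hpsum : p.1 + p.2 = N := Finset.HasAntidiagonal.mem_antidiagonal.1 hpmem'
    have key : polyTerm r f p.1 * polyTerm r g p.2 < c * d := by
      rcases lt_trichotomy (toLex p.1) (toLex Istar) with hlt | heq | hgt
      · -- then `toLex Jstar < toLex p.2`, so `p.2` does not achieve for `g`
        have hJlt : toLex Jstar < toLex p.2 := by
          by_contra hle
          push_neg at hle
          have : toLex (p.1 + p.2) < toLex (Istar + Jstar) := by
            rw [toLex_add, toLex_add]
            exact add_lt_add_of_lt_of_le hlt hle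
          rw [hpsum, ← hN] at this
          exact lt_irrefl _ this
        have hp2 : polyTerm r g p.2 < d := by
          refine lt_of_le_of_ne (polyTerm_le_gaussNorm hg p.2) fun hach2 => ?_
          have := hJmax p.2 (by simpa [Set.Finite.mem_toFinset] using hach2)
          exact absurd this (not_le.2 hJlt)
        calc polyTerm r f p.1 * polyTerm r g p.2
            ≤ c * polyTerm r g p.2 :=
              mul_le_mul_of_nonneg_right (polyTerm_le_gaussNorm hf p.1)
                (polyTerm_nonneg hr g p.2)
          _ < c * d := by
              exact mul_lt_mul_of_pos_left hp2 hcpos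
      · -- impossible: then `p = pstar`
        exfalso
        apply hpne
        have h1 : p.1 = Istar := toLex.injective heq
        have h2 : p.2 = Jstar := by
          have h3 : p.1 + p.2 = Istar + Jstar := hpsum.trans hN
          rw [h1] at h3
          exact add_left_cancel h3
        exact Prod.ext h1 h2
      · -- then `p.1` does not achieve for `f`
        have hp1 : polyTerm r f p.1 < c := by
          refine lt_of_le_of_ne (polyTerm_le_gaussNorm hf p.1) fun hach1 => ?_
          have := hImax p.1 (by simpa [Set.Finite.mem_toFinset] using hach1)
          exact absurd this (not_le.2 hgt)
        calc polyTerm r f p.1 * polyTerm r g p.2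
            ≤ polyTerm r f p.1 * d :=
              mul_le_mul_of_nonneg_left (polyTerm_le_gaussNorm hg p.2)
                (polyTerm_nonneg hr f p.1)
          _ < c * d := mul_lt_mul_of_pos_right hp1 hdpos
    -- translate to norms of the coefficients
    have hwp : (∏ i, r i ^ N i) = (∏ i, r i ^ p.1 i) * ∏ i, r i ^ p.2 i :=
      polyWeight_add hpsum
    have hTp : ‖T p‖ * (∏ i, r i ^ N i) = polyTerm r f p.1 * polyTerm r g p.2 := by
      rw [hT]
      simp only [norm_mul]
      rw [hwp, polyTerm, polyTerm]
      ring
    have := hTstar ▸ key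
    rw [← hTp] at this
    exact lt_of_mul_lt_mul_right (by rw [hTp, hTstar]; exact key) hwNpos.le
  -- conclude: the sum cannot be zero
  have hsplit : T pstar + ∑ p ∈ (Finset.HasAntidiagonal.antidiagonal N).erase pstar, T p = 0 := by
    rw [Finset.add_sum_erase _ T hpmem]
    exact hco
  rcases ((Finset.HasAntidiagonal.antidiagonal N).erase pstar).eq_empty_or_nonempty with hemp | hnemp
  · rw [hemp] at hsplit
    simp only [Finset.sum_empty, add_zero] at hsplit
    rw [hsplit] at hTstarpos
    simp at hTstarpos
  · have hrest : ‖∑ p ∈ (Finset.HasAntidiagonal.antidiagonal N).erase pstar, T p‖ < ‖T pstar‖ := by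
      refine lt_of_le_of_lt (hnemp.norm_sum_le_sup'_norm T) ?_
      rw [Finset.sup'_lt_iff]
      intro p hp
      exact hstrict p hp
    have : ‖T pstar + ∑ p ∈ (Finset.HasAntidiagonal.antidiagonal N).erase pstar, T p‖ = ‖T pstar‖ := by
      rw [IsUltrametricDist.norm_add_eq_max_of_norm_ne_norm hrest.ne.symm]
      exact max_eq_left hrest.le
    rw [hsplit] at this
    simp only [norm_zero] at this
    exact absurd this.symm (ne_of_gt hTstarpos)

lemma polyDegree_add (a b : Fin n →₀ ℕ) :
    Finsupp.degree (a + b) = Finsupp.degree a + Finsupp.degree b := by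
  simp only [Finsupp.degree_eq_weight_one, map_add]

lemma polyProd_nonneg {s : Multiset ℝ} (h : ∀ x ∈ s, (0:ℝ) ≤ x) : 0 ≤ s.prod := by
  induction s using Multiset.induction_on with
  | empty => simp
  | cons a t IH =>
    rw [Multiset.prod_cons]
    exact mul_nonneg (h a (Multiset.mem_cons_self a t))
      (IH fun x hx => h x (Multiset.mem_cons_of_mem hx))

lemma polyProd_le_pow {s : Multiset ℝ} {b : ℝ} (hb : 0 ≤ b)
    (h0 : ∀ x ∈ s, (0:ℝ) ≤ x) (h1 : ∀ x ∈ s, x ≤ b) :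
    s.prod ≤ b ^ Multiset.card s := by
  induction s using Multiset.induction_on with
  | empty => simp
  | cons a t IH =>
    rw [Multiset.prod_cons, Multiset.card_cons, pow_succ, mul_comm (b ^ Multiset.card t) b]
    exact mul_le_mul (h1 a (Multiset.mem_cons_self a t))
      (IH (fun x hx => h0 x (Multiset.mem_cons_of_mem hx))
        (fun x hx => h1 x (Multiset.mem_cons_of_mem hx)))
      (polyProd_nonneg fun x hx => h0 x (Multiset.mem_cons_of_mem hx)) hb

lemma polyProd_le_single {s : Multiset ℝ} {a : ℝ} (ha : a ∈ s)
    (h0 : ∀ x ∈ s, (0:ℝ) ≤ x) (h1 : ∀ x ∈ s, x ≤ 1) :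
    s.prod ≤ a := by
  obtain ⟨t, rfl⟩ := Multiset.exists_cons_of_mem ha
  rw [Multiset.prod_cons]
  have ht1 : t.prod ≤ 1 := by
    have := polyProd_le_pow (zero_le_one (α := ℝ))
      (fun x hx => h0 x (Multiset.mem_cons_of_mem hx))
      (fun x hx => h1 x (Multiset.mem_cons_of_mem hx))
    simpa using this
  calc a * t.prod ≤ a * 1 :=
        mul_le_mul_of_nonneg_left ht1 (h0 a (Multiset.mem_cons_self a t))
    _ = a := mul_one a

lemma polyDegree_multiset_sum {n : ℕ} (s : Multiset (Fin n →₀ ℕ)) :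
    Finsupp.degree s.sum = (s.map Finsupp.degree).sum := by
  induction s using Multiset.induction_on with
  | empty => simp [map_zero]
  | cons a t IH => rw [Multiset.sum_cons, polyDegree_add, Multiset.map_cons,
      Multiset.sum_cons, IH]

/-- Backward direction: the inverse power series has controlled coefficients. -/
lemma polyInv_mem [IsUltrametricDist K] {r : Fin n → ℝ} (hr : ∀ i, 0 < r i)
    {f : MvPowerSeries (Fin n) K} (hf0 : f ≠ 0) (hf : MemPolydisc r f)
    (hach0 : ∀ I, polyTerm r f I = gaussNorm r f → I = 0) :
    MemPolydisc r (f⁻¹ : MvPowerSeries (Fin n) K) ∧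
      MvPowerSeries.constantCoeff f ≠ 0 := by
  classical
  obtain ⟨c, hc⟩ : ∃ c, gaussNorm r f = c := ⟨_, rfl⟩
  rw [hc] at hach0
  have hcpos : 0 < c := hc ▸ gaussNorm_pos hr hf0 hf
  obtain ⟨I1, hI1⟩ := polyAttained hr hf0 hf
  rw [hc] at hI1
  have hI1z : I1 = 0 := hach0 I1 hI1
  have hw0 : (∏ i, r i ^ (0 : Fin n →₀ ℕ) i) = 1 := by simp
  have hc0 : ‖MvPowerSeries.constantCoeff f‖ = c := by
    rw [hI1z] at hI1
    rw [polyTerm, hw0, mul_one] at hI1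
    rw [← hI1, ← MvPowerSeries.coeff_zero_eq_constantCoeff_apply]
  have hconst : MvPowerSeries.constantCoeff f ≠ 0 := by
    intro h
    rw [h, norm_zero] at hc0
    exact absurd hc0.symm (ne_of_gt hcpos)
  refine ⟨?_, hconst⟩
  -- a uniform bound `Q < c` for all nonzero-index terms
  have hFfin : {I : Fin n →₀ ℕ | ¬ polyTerm r f I < c / 2}.Finite := by
    have := hf.eventually (gt_mem_nhds (half_pos hcpos))
    simpa [Filter.eventually_cofinite, polyTerm] using this
  set Fs : Finset (Fin n →₀ ℕ) := hFfin.toFinset.erase 0 with hFs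
  set Qset : Finset ℝ := insert (c / 2) (Fs.image (polyTerm r f)) with hQset
  have hQne : Qset.Nonempty := ⟨c / 2, Finset.mem_insert_self _ _⟩
  set Q : ℝ := Qset.max' hQne with hQ
  have hQhalf : c / 2 ≤ Q := Finset.le_max' _ _ (Finset.mem_insert_self _ _)
  have hQpos : 0 < Q := lt_of_lt_of_le (half_pos hcpos) hQhalf
  have hQlt : Q < c := by
    rw [hQ]
    rw [Finset.max'_lt_iff]
    intro x hx
    rcases Finset.mem_insert.1 hx with rfl | hx
    · exact half_lt_self hcpos
    · obtain ⟨I, hImem, rfl⟩ := Finset.mem_image.1 hx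
      have hIne : I ≠ 0 := (Finset.mem_erase.1 hImem).1
      refine lt_of_le_of_ne (hc ▸ polyTerm_le_gaussNorm hf I) fun h => hIne (hach0 I h)
  have hQbound : ∀ I : Fin n →₀ ℕ, I ≠ 0 → polyTerm r f I ≤ Q := by
    intro I hIne
    by_cases hI : polyTerm r f I < c / 2
    · exact hI.le.trans hQhalf
    · refine Finset.le_max' _ _ (Finset.mem_insert_of_mem (Finset.mem_image.2 ⟨I, ?_, rfl⟩))
      rw [hFs, Finset.mem_erase]
      exact ⟨hIne, by simpa [Set.Finite.mem_toFinset] using hI⟩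
  -- the decomposition bound, by strong induction on degree
  have hrec : ∀ dd : ℕ, ∀ I : Fin n →₀ ℕ, Finsupp.degree I = dd →
      ∃ s : Multiset (Fin n →₀ ℕ), s.sum = I ∧ (∀ J ∈ s, J ≠ 0) ∧
        ‖MvPowerSeries.coeff I (f⁻¹)‖ * (∏ i, r i ^ I i) ≤
          c⁻¹ * (s.map fun J => polyTerm r f J / c).prod := by
    intro dd
    induction dd using Nat.strong_induction_on with
    | _ dd IH =>
      intro I hIdeg
      have hwI : 0 < ∏ i, r i ^ I i := polyWeight_pos hr I
      by_cases h0 : I = 0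
      · subst h0
        refine ⟨0, by simp, by simp, ?_⟩
        have hcoe : MvPowerSeries.coeff (0 : Fin n →₀ ℕ) (f⁻¹) =
            (MvPowerSeries.constantCoeff f)⁻¹ := by
          rw [MvPowerSeries.coeff_inv, if_pos rfl]
        rw [hcoe, hw0, mul_one, norm_inv, hc0]
        simp
      · have hnz : MvPowerSeries.coeff I (f⁻¹) =
            -(MvPowerSeries.constantCoeff f)⁻¹ *
              ∑ x ∈ Finset.HasAntidiagonal.antidiagonal I,
                if x.2 < I then MvPowerSeries.coeff x.1 f *
                  MvPowerSeries.coeff x.2 (f⁻¹) else 0 := by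
          rw [MvPowerSeries.coeff_inv, if_neg h0]
        have hane : (Finset.HasAntidiagonal.antidiagonal I).Nonempty :=
          ⟨(0, I), Finset.HasAntidiagonal.mem_antidiagonal.2 (zero_add I)⟩
        obtain ⟨x, hxmem, hxle⟩ :=
          IsUltrametricDist.exists_norm_finset_sum_le_of_nonempty hane
            (fun x : (Fin n →₀ ℕ) × (Fin n →₀ ℕ) =>
              if x.2 < I then MvPowerSeries.coeff x.1 f *
                MvPowerSeries.coeff x.2 (f⁻¹) else 0)
        have hnorm : ‖MvPowerSeries.coeff I (f⁻¹)‖ =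
            c⁻¹ * ‖∑ x ∈ Finset.HasAntidiagonal.antidiagonal I,
              if x.2 < I then MvPowerSeries.coeff x.1 f *
                MvPowerSeries.coeff x.2 (f⁻¹) else 0‖ := by
          rw [hnz, norm_mul, norm_neg, norm_inv, hc0]
        by_cases hxlt : x.2 < I
        · rw [if_pos hxlt] at hxle
          have hxsum : x.1 + x.2 = I := Finset.HasAntidiagonal.mem_antidiagonal.1 hxmem
          have hx1ne : x.1 ≠ 0 := by
            intro h
            rw [h, zero_add] at hxsum
            rw [hxsum] at hxlt
            exact lt_irrefl _ hxlt
          have hdeg : Finsupp.degree x.1 + Finsupp.degree x.2 = dd := by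
            rw [← polyDegree_add, hxsum, hIdeg]
          have hd1 : 1 ≤ Finsupp.degree x.1 := by
            rw [Nat.one_le_iff_ne_zero]
            intro h
            exact hx1ne ((Finsupp.degree_eq_zero_iff x.1).1 h)
          have hd2lt : Finsupp.degree x.2 < dd := by omega
          obtain ⟨s', hsum', hne', hb'⟩ := IH (Finsupp.degree x.2) hd2lt x.2 rfl
          refine ⟨x.1 ::ₘ s', by rw [Multiset.sum_cons, hsum', hxsum], ?_, ?_⟩
          · intro J hJ
            rcases Multiset.mem_cons.1 hJ with rfl | hJ
            · exact hx1ne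
            · exact hne' J hJ
          · have hwx : (∏ i, r i ^ I i) = (∏ i, r i ^ x.1 i) * ∏ i, r i ^ x.2 i :=
              polyWeight_add hxsum
            have h1 : ‖∑ x ∈ Finset.HasAntidiagonal.antidiagonal I,
                if x.2 < I then MvPowerSeries.coeff x.1 f *
                  MvPowerSeries.coeff x.2 (f⁻¹) else 0‖ ≤
                ‖MvPowerSeries.coeff x.1 f‖ * ‖MvPowerSeries.coeff x.2 (f⁻¹)‖ := by
              rw [← norm_mul]; exact hxle
            have hstep : ‖MvPowerSeries.coeff I (f⁻¹)‖ * (∏ i, r i ^ I i) ≤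
                c⁻¹ * ((‖MvPowerSeries.coeff x.1 f‖ * (∏ i, r i ^ x.1 i)) *
                  (‖MvPowerSeries.coeff x.2 (f⁻¹)‖ * (∏ i, r i ^ x.2 i))) := by
              rw [hnorm, hwx]
              calc c⁻¹ * ‖∑ x ∈ Finset.HasAntidiagonal.antidiagonal I,
                    if x.2 < I then MvPowerSeries.coeff x.1 f *
                      MvPowerSeries.coeff x.2 (f⁻¹) else 0‖ *
                    ((∏ i, r i ^ x.1 i) * ∏ i, r i ^ x.2 i)
                  ≤ c⁻¹ * (‖MvPowerSeries.coeff x.1 f‖ *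
                      ‖MvPowerSeries.coeff x.2 (f⁻¹)‖) *
                    ((∏ i, r i ^ x.1 i) * ∏ i, r i ^ x.2 i) := by
                    refine mul_le_mul_of_nonneg_right
                      (mul_le_mul_of_nonneg_left h1 (inv_nonneg.2 hcpos.le))
                      (mul_nonneg (polyWeight_pos hr x.1).le (polyWeight_pos hr x.2).le)
                _ = c⁻¹ * ((‖MvPowerSeries.coeff x.1 f‖ * (∏ i, r i ^ x.1 i)) *
                    (‖MvPowerSeries.coeff x.2 (f⁻¹)‖ * (∏ i, r i ^ x.2 i))) := by
                    ring
            refine hstep.trans ?_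
            rw [Multiset.map_cons, Multiset.prod_cons]
            have hterm : (0:ℝ) ≤ ‖MvPowerSeries.coeff x.1 f‖ * (∏ i, r i ^ x.1 i) :=
              mul_nonneg (norm_nonneg _) (polyWeight_pos hr x.1).le
            calc c⁻¹ * ((‖MvPowerSeries.coeff x.1 f‖ * (∏ i, r i ^ x.1 i)) *
                  (‖MvPowerSeries.coeff x.2 (f⁻¹)‖ * (∏ i, r i ^ x.2 i)))
                ≤ c⁻¹ * ((‖MvPowerSeries.coeff x.1 f‖ * (∏ i, r i ^ x.1 i)) *
                  (c⁻¹ * (Multiset.map (fun J => polyTerm r f J / c) s').prod)) :=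
                  mul_le_mul_of_nonneg_left
                    (mul_le_mul_of_nonneg_left hb' hterm) (inv_nonneg.2 hcpos.le)
              _ = c⁻¹ * (polyTerm r f x.1 / c *
                  (Multiset.map (fun J => polyTerm r f J / c) s').prod) := by
                  rw [polyTerm]
                  field_simp
        · rw [if_neg hxlt, norm_zero] at hxle
          refine ⟨{I}, by simp, by simpa using h0, ?_⟩
          have hz : ‖MvPowerSeries.coeff I (f⁻¹)‖ = 0 := by
            rw [hnorm]
            have h2 : ‖∑ x ∈ Finset.HasAntidiagonal.antidiagonal I,
                if x.2 < I then MvPowerSeries.coeff x.1 f *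
                  MvPowerSeries.coeff x.2 (f⁻¹) else 0‖ = 0 :=
              le_antisymm hxle (norm_nonneg _)
            rw [h2, mul_zero]
          rw [hz, zero_mul]
          simp only [Multiset.map_singleton, Multiset.prod_singleton]
          have := polyTerm_nonneg hr f I
          positivity
  -- conclude the tendsto statement
  rw [MemPolydisc, Metric.tendsto_nhds]
  intro ε hε
  rw [Filter.eventually_cofinite]
  -- choose `k₀` with `(Q/c)^k₀ < ε·c`
  obtain ⟨k₀, hk₀⟩ := exists_pow_lt_of_lt_one (mul_pos hε hcpos) ((div_lt_one hcpos).2 hQlt)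
  -- the finite set of "large" indices
  have hGfin : {J : Fin n →₀ ℕ | ¬ polyTerm r f J < ε * c * c}.Finite := by
    have hpos : 0 < ε * c * c := by positivity
    have := hf.eventually (gt_mem_nhds hpos)
    simpa [Filter.eventually_cofinite, polyTerm] using this
  set DG : ℕ := hGfin.toFinset.sup Finsupp.degree with hDG
  refine (Finsupp.finite_of_degree_le (k₀ * DG)).subset ?_
  intro I hI
  simp only [Set.mem_setOf_eq] at hI ⊢
  have hIb : ε ≤ ‖MvPowerSeries.coeff I (f⁻¹)‖ * ∏ i, r i ^ I i := by
    have h1 : 0 ≤ ‖MvPowerSeries.coeff I (f⁻¹)‖ * ∏ i, r i ^ I i :=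
      mul_nonneg (norm_nonneg _) (polyWeight_pos hr I).le
    rw [Real.dist_eq, sub_zero, abs_of_nonneg h1] at hI
    exact not_lt.1 hI
  obtain ⟨s, hsum, hsne, hb⟩ := hrec (Finsupp.degree I) I rfl
  set sm : Multiset ℝ := Multiset.map (fun J => polyTerm r f J / c) s with hsm
  have hfac0 : ∀ x ∈ sm, (0:ℝ) ≤ x := by
    intro x hx
    obtain ⟨J, _, rfl⟩ := Multiset.mem_map.1 hx
    exact div_nonneg (polyTerm_nonneg hr f J) hcpos.le
  have hfacQ : ∀ x ∈ sm, x ≤ Q / c := by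
    intro x hx
    obtain ⟨J, hJ, rfl⟩ := Multiset.mem_map.1 hx
    have := hQbound J (hsne J hJ)
    gcongr
  have hfac1 : ∀ x ∈ sm, x ≤ 1 :=
    fun x hx => (hfacQ x hx).trans ((div_le_one hcpos).2 hQlt.le)
  have hεm : ε ≤ c⁻¹ * sm.prod := hIb.trans hb
  -- bound on the multiset cardinality
  have hcard : Multiset.card s ≤ k₀ := by
    by_contra hcb
    push_neg at hcb
    have hprod : sm.prod ≤ (Q / c) ^ Multiset.card s := by
      have := polyProd_le_pow (div_nonneg hQpos.le hcpos.le) hfac0 hfacQ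
      rwa [hsm, Multiset.card_map] at this
    have h2 : (Q / c) ^ Multiset.card s ≤ (Q / c) ^ k₀ :=
      pow_le_pow_of_le_one (div_nonneg hQpos.le hcpos.le)
        ((div_le_one hcpos).2 hQlt.le) hcb.le
    have h4 : ε ≤ c⁻¹ * (Q / c) ^ k₀ :=
      hεm.trans (mul_le_mul_of_nonneg_left (hprod.trans h2) (inv_nonneg.2 hcpos.le))
    have h5 : c⁻¹ * (Q / c) ^ k₀ < c⁻¹ * (ε * c) :=
      mul_lt_mul_of_pos_left hk₀ (inv_pos.2 hcpos)
    have h6 : c⁻¹ * (ε * c) = ε := by field_simp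
    linarith
  -- each index in the decomposition has bounded degree
  have hJdeg : ∀ J ∈ s, Finsupp.degree J ≤ DG := by
    intro J hJ
    have hmem : (polyTerm r f J / c) ∈ sm := by
      rw [hsm]; exact Multiset.mem_map_of_mem _ hJ
    have hsingle : sm.prod ≤ polyTerm r f J / c :=
      polyProd_le_single hmem hfac0 hfac1
    have h6 : ε ≤ c⁻¹ * (polyTerm r f J / c) :=
      hεm.trans (mul_le_mul_of_nonneg_left hsingle (inv_nonneg.2 hcpos.le))
    have h7 : ε * c * c ≤ polyTerm r f J := by
      have h8 := mul_le_mul_of_nonneg_right h6 (mul_pos hcpos hcpos).le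
      have h9 : c⁻¹ * (polyTerm r f J / c) * (c * c) = polyTerm r f J := by
        field_simp
      rw [h9] at h8
      calc ε * c * c = ε * (c * c) := by ring
        _ ≤ polyTerm r f J := h8
    refine Finset.le_sup (f := Finsupp.degree) ?_
    rw [Set.Finite.mem_toFinset]
    exact not_lt.2 h7
  -- conclude the degree bound
  have hdegI : Finsupp.degree I = (s.map Finsupp.degree).sum := by
    rw [← hsum, polyDegree_multiset_sum]
  have hdle : (s.map Finsupp.degree).sum ≤ Multiset.card (s.map Finsupp.degree) • DG := by
    refine Multiset.sum_le_card_nsmul _ _ ?_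
    intro x hx
    obtain ⟨J, hJ, rfl⟩ := Multiset.mem_map.1 hx
    exact hJdeg J hJ
  rw [hdegI]
  calc (s.map Finsupp.degree).sum ≤ Multiset.card (s.map Finsupp.degree) • DG := hdle
    _ = Multiset.card s * DG := by rw [Multiset.card_map, smul_eq_mul]
    _ ≤ k₀ * DG := Nat.mul_le_mul_right DG hcard

end Aux


/-- A nonzero element `f` of the polydisc algebra `K{r⁻¹T}` over a complete
non-archimedean valued field is a unit of the polydisc algebra (there is `g` in the
polydisc algebra with `f·g = 1`) if and only if `ord(f) = 0`. -/
theorem isUnit_polydisc_iff_polyOrd_eq_zero {K : Type*} [NormedField K]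
    [IsUltrametricDist K] [CompleteSpace K] {n : ℕ} (r : Fin n → ℝ) (hr : ∀ i, 0 < r i)
    (f : MvPowerSeries (Fin n) K) (hf0 : f ≠ 0) (hf : MemPolydisc r f) :
    (∃ g : MvPowerSeries (Fin n) K, MemPolydisc r g ∧ f * g = 1) ↔ polyOrd r f = 0 := by
  constructor
  · rintro ⟨g, hg, hfg⟩
    have claim := polyAchieve_eq_zero hr hf hg hf0 hfg
    have hsub : {d : ℕ | ∃ I : Fin n →₀ ℕ, (I.sum fun _ k => k) = d ∧
        ‖MvPowerSeries.coeff I f‖ * ∏ i, r i ^ I i = gaussNorm r f} ⊆ {0} := by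
      rintro d ⟨I, hdeg, hach⟩
      have hI0 : I = 0 := claim I hach
      subst hI0
      simp only [Finsupp.sum_zero_index] at hdeg
      simp [← hdeg]
    rcases Set.subset_singleton_iff_eq.1 hsub with h | h
    · simp [polyOrd, h]
    · simp [polyOrd, h]
  · intro hord
    have hAfin := polyAchieve_finite hr hf0 hf
    have hach0 : ∀ I, polyTerm r f I = gaussNorm r f → I = 0 := by
      intro I hI
      have hmemD : Finsupp.degree I ∈ {d : ℕ | ∃ I : Fin n →₀ ℕ,
          (I.sum fun _ k => k) = d ∧
          ‖MvPowerSeries.coeff I f‖ * ∏ i, r i ^ I i = gaussNorm r f} := ⟨I, rfl, hI⟩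
      have hbdd : BddAbove {d : ℕ | ∃ I : Fin n →₀ ℕ,
          (I.sum fun _ k => k) = d ∧
          ‖MvPowerSeries.coeff I f‖ * ∏ i, r i ^ I i = gaussNorm r f} := by
        refine BddAbove.mono ?_ ((hAfin.image (fun I => I.sum fun _ k => k)).bddAbove)
        rintro d ⟨J, hdeg, hach⟩
        exact ⟨J, hach, hdeg⟩
      have hle := le_csSup hbdd hmemD
      have : Finsupp.degree I ≤ polyOrd r f := hle
      rw [hord] at this
      exact (Finsupp.degree_eq_zero_iff I).1 (Nat.le_zero.1 this)
    obtain ⟨hmem, hconst⟩ := polyInv_mem hr hf0 hf hach0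
    exact ⟨f⁻¹, hmem, MvPowerSeries.mul_inv_cancel f hconst⟩
end

section
/- Let (K, |·|) be a complete non-archimedean field, r₀, s₀ > 0, u ∈ K{r₀⁻¹z} and v ∈ K{s₀⁻¹z} power series with u(0) = v(0) = 0 satisfying u(v(z)) = v(u(z)) = z as formal power series. Then there exists r₁ ∈ (0, r₀] such that for all r ∈ (0, r₁], the map z ↦ u(z) defines an isometric isomorphism K{(|u'(0)|·r)⁻¹ z} → K{r⁻¹z}, with inverse given by z ↦ v(z), and ‖v‖ on radius |u'(0)|·r equals r. -/
open Filter

/-- Membership in the one-variable disc algebra `K{r⁻¹z}`: coefficients satisfy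
`‖aₖ‖ rᵏ → 0`. -/
def MemDisc {K : Type*} [NormedField K] (r : ℝ) (f : PowerSeries K) : Prop :=
  Tendsto (fun k : ℕ => ‖PowerSeries.coeff k f‖ * r ^ k) atTop (nhds 0)

/-- The Gauss norm `‖∑ aₖ zᵏ‖_r = sup_k ‖aₖ‖ rᵏ`. -/
noncomputable def gauss1 {K : Type*} [NormedField K] (r : ℝ) (f : PowerSeries K) : ℝ :=
  ⨆ k : ℕ, ‖PowerSeries.coeff k f‖ * r ^ k

/-- Composition `f(g(z))` of formal power series; when `g` has zero constant term this is
the usual substitution. -/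
noncomputable def psComp {K : Type*} [CommRing K] (f g : PowerSeries K) : PowerSeries K :=
  PowerSeries.mk fun n =>
    ∑ k ∈ Finset.range (n + 1), PowerSeries.coeff k f * PowerSeries.coeff n (g ^ k)

open PowerSeries Finset

section Alg
variable {R : Type*} [CommRing R]

lemma coeff_psComp (f g : PowerSeries R) (n : ℕ) :
    coeff n (psComp f g) = ∑ k ∈ range (n + 1), coeff k f * coeff n (g ^ k) := by
  simp [psComp]

lemma coeff_pow_eq_zero {w : PowerSeries R} (hw : constantCoeff w = 0) {n k : ℕ}
    (h : n < k) : coeff n (w ^ k) = 0 := by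
  have : (X : PowerSeries R) ^ k ∣ w ^ k := pow_dvd_pow_of_dvd (X_dvd_iff.2 hw) k
  exact (X_pow_dvd_iff.1 this) n h

lemma coeff_aeval_poly (p : Polynomial R) (u : PowerSeries R) (n N : ℕ)
    (hN : p.natDegree < N) :
    coeff n (Polynomial.aeval u p) = ∑ k ∈ range N, p.coeff k * coeff n (u ^ k) := by
  rw [Polynomial.aeval_eq_sum_range' hN, map_sum]
  exact Finset.sum_congr rfl fun k _ => by rw [PowerSeries.coeff_smul, smul_eq_mul]

lemma natDegree_trunc_lt' (f : PowerSeries R) {N : ℕ} (hN : 0 < N) :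
    (trunc N f).natDegree < N := by
  by_cases h : trunc N f = 0
  · simpa [h] using hN
  · exact (Polynomial.natDegree_lt_iff_degree_lt h).mpr (degree_trunc_lt f N)

lemma coeff_psComp_eq_aeval (f u : PowerSeries R) (hu : constantCoeff u = 0)
    {n N : ℕ} (hn : n < N) :
    coeff n (psComp f u) = coeff n (Polynomial.aeval u (trunc N f)) := by
  rw [coeff_aeval_poly _ u n N (natDegree_trunc_lt' f (Nat.zero_lt_of_lt hn)), coeff_psComp]
  rw [Finset.sum_subset (Finset.range_subset_range.2 hn)]
  · exact Finset.sum_congr rfl fun k hk => by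
      rw [coeff_trunc, if_pos (Finset.mem_range.1 hk)]
  · intro k hk hk'
    rw [coeff_pow_eq_zero hu (by simpa using hk'), mul_zero]

lemma coeff_aeval_eq_zero {p : Polynomial R} {u : PowerSeries R} (hu : constantCoeff u = 0)
    {n N : ℕ} (hn : n < N) (hp : ∀ k < N, p.coeff k = 0) :
    coeff n (Polynomial.aeval u p) = 0 := by
  rw [coeff_aeval_poly p u n (max N (p.natDegree + 1))
    (lt_of_lt_of_le (Nat.lt_succ_self _) (le_max_right _ _))]
  refine Finset.sum_eq_zero fun k _ => ?_
  rcases lt_or_ge k N with h | h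
  · rw [hp k h, zero_mul]
  · rw [coeff_pow_eq_zero hu (lt_of_lt_of_le hn h), mul_zero]

lemma psComp_mul (f g u : PowerSeries R) (hu : constantCoeff u = 0) :
    psComp (f * g) u = psComp f u * psComp g u := by
  ext n
  set N := n + 1 with hN
  have hn : n < N := Nat.lt_succ_self n
  have h1 : coeff n (psComp (f * g) u)
      = coeff n (Polynomial.aeval u (trunc N f * trunc N g)) := by
    rw [coeff_psComp_eq_aeval _ u hu hn]
    have hz : coeff n (Polynomial.aeval u (trunc N f * trunc N g - trunc N (f * g))) = 0 := by
      refine coeff_aeval_eq_zero hu hn fun k hk => ?_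
      rw [Polynomial.coeff_sub]
      have e1 : (trunc N f * trunc N g).coeff k
          = (trunc N ((trunc N f : PowerSeries R) * (trunc N g : PowerSeries R))).coeff k := by
        rw [coeff_trunc, if_pos hk, ← Polynomial.coeff_coe, Polynomial.coe_mul]
      rw [e1, trunc_trunc_mul_trunc]
      ring
    rw [map_sub, map_sub, sub_eq_zero] at hz
    exact hz.symm
  rw [h1, map_mul, PowerSeries.coeff_mul, PowerSeries.coeff_mul]
  refine Finset.sum_congr rfl fun pq hpq => ?_
  have hp : pq.1 ≤ n := Finset.HasAntidiagonal.antidiagonal.fst_le hpq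
  have hq : pq.2 ≤ n := Finset.HasAntidiagonal.antidiagonal.snd_le hpq
  rw [← coeff_psComp_eq_aeval f u hu (lt_of_le_of_lt hp hn),
      ← coeff_psComp_eq_aeval g u hu (lt_of_le_of_lt hq hn)]

lemma psComp_one (u : PowerSeries R) : psComp 1 u = 1 := by
  ext n
  rw [coeff_psComp]
  rw [Finset.sum_eq_single 0]
  · simp
  · intro k hk hk0
    rw [PowerSeries.coeff_one, if_neg hk0, zero_mul]
  · simp
lemma psComp_pow (f u : PowerSeries R) (hu : constantCoeff u = 0) (m : ℕ) :
    psComp (f ^ m) u = psComp f u ^ m := by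
  induction m with
  | zero => simpa using psComp_one u
  | succ m ih => rw [pow_succ, psComp_mul _ _ _ hu, ih, pow_succ]

lemma psComp_X_right (h : PowerSeries R) : psComp h X = h := by
  ext n
  rw [coeff_psComp]
  rw [Finset.sum_eq_single n]
  · rw [PowerSeries.coeff_X_pow, if_pos rfl, mul_one]
  · intro k hk hkn
    rw [PowerSeries.coeff_X_pow, if_neg (Ne.symm hkn), mul_zero]
  · intro h; exact absurd (Finset.self_mem_range_succ n) h

lemma psComp_assoc (h v u : PowerSeries R) (hu : constantCoeff u = 0)
    (hv : constantCoeff v = 0) :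
    psComp (psComp h v) u = psComp h (psComp v u) := by
  ext n
  rw [coeff_psComp, coeff_psComp]
  have step : ∀ k ∈ range (n+1), coeff k (psComp h v) * coeff n (u ^ k)
      = ∑ j ∈ range (n+1), coeff j h * (coeff k (v ^ j) * coeff n (u ^ k)) := by
    intro k hk
    rw [coeff_psComp, Finset.sum_mul]
    rw [Finset.sum_subset (Finset.range_subset_range.2 (Nat.succ_le_succ (Nat.lt_succ_iff.mp
      (Finset.mem_range.mp hk))))]
    · exact Finset.sum_congr rfl fun j _ => by ring
    · intro j hj hj'
      rw [coeff_pow_eq_zero hv (by simpa using hj'), mul_zero, zero_mul]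
  rw [Finset.sum_congr rfl step, Finset.sum_comm]
  refine Finset.sum_congr rfl fun j _ => ?_
  rw [← Finset.mul_sum, ← psComp_pow v u hu j, coeff_psComp]

end Alg

section Anal
variable {K : Type*} [NormedField K] [IsUltrametricDist K]

variable {K : Type*} [NormedField K] [IsUltrametricDist K]

lemma coeff_pow_norm_bound {w : PowerSeries K} (hw0 : constantCoeff w = 0) {s C : ℝ}
    (hs : 0 < s) (hC : 0 ≤ C) (hw : ∀ k : ℕ, 1 ≤ k → ‖coeff k w‖ * (2 * s) ^ k ≤ C) :
    ∀ m n : ℕ, ‖coeff n (w ^ m)‖ ≤ C ^ m / (2 * s) ^ n := by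
  have hP : (0:ℝ) < 2 * s := by linarith
  intro m
  induction m with
  | zero =>
    intro n
    rcases Nat.eq_zero_or_pos n with rfl | hn
    · simp
    · rw [pow_zero, PowerSeries.coeff_one, if_neg hn.ne']
      simp only [norm_zero]
      positivity
  | succ m ih =>
    intro n
    rw [pow_succ, PowerSeries.coeff_mul]
    refine IsUltrametricDist.norm_sum_le_of_forall_le_of_nonneg (by positivity) ?_
    rintro ⟨p, q⟩ hpq
    have hpq' : p + q = n := Finset.HasAntidiagonal.mem_antidiagonal.mp hpq
    rcases Nat.eq_zero_or_pos q with rfl | hq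
    · simp only [coeff_zero_eq_constantCoeff] at *
      rw [hw0, mul_zero, norm_zero]
      positivity
    · have h1 : ‖coeff p (w ^ m)‖ ≤ C ^ m / (2 * s) ^ p := ih p
      have h2 : ‖coeff q w‖ ≤ C / (2 * s) ^ q :=
        (le_div_iff₀ (by positivity)).mpr (hw q hq)
      calc ‖coeff p (w ^ m) * coeff q w‖ = ‖coeff p (w ^ m)‖ * ‖coeff q w‖ :=
            norm_mul _ _
        _ ≤ (C ^ m / (2 * s) ^ p) * (C / (2 * s) ^ q) := by
            exact mul_le_mul h1 h2 (norm_nonneg _) (by positivity)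
        _ = C ^ (m + 1) / (2 * s) ^ n := by
            rw [← hpq', pow_add, pow_succ, div_mul_div_comm]
            ring

lemma comp_coeff_bound' {w : PowerSeries K} (hw0 : constantCoeff w = 0) {s ρ : ℝ}
    (hs : 0 < s) (hρ : 0 ≤ ρ)
    (hw : ∀ k : ℕ, 1 ≤ k → ‖coeff k w‖ * (2 * s) ^ k ≤ 2 * ρ)
    (g : PowerSeries K) (n : ℕ) :
    ∃ m ≤ n, ‖coeff n (psComp g w)‖ * s ^ n * 2 ^ n ≤ ‖coeff m g‖ * ρ ^ m * 2 ^ m := by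
  have hP : (0:ℝ) < 2 * s := by linarith
  have hco := coeff_pow_norm_bound hw0 hs (by linarith) hw
  rw [show (psComp g w) = PowerSeries.mk fun n => ∑ k ∈ Finset.range (n + 1),
      PowerSeries.coeff k g * PowerSeries.coeff n (w ^ k) from rfl]
  obtain ⟨m, hm, hle⟩ := IsUltrametricDist.exists_norm_finset_sum_le_of_nonempty
    (Finset.nonempty_range_add_one (n := n))
    (fun k => PowerSeries.coeff k g * PowerSeries.coeff n (w ^ k))
  refine ⟨m, Nat.lt_succ_iff.mp (Finset.mem_range.mp hm), ?_⟩
  rw [PowerSeries.coeff_mk]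
  calc ‖∑ k ∈ Finset.range (n + 1), coeff k g * coeff n (w ^ k)‖ * s ^ n * 2 ^ n
      ≤ ‖coeff m g * coeff n (w ^ m)‖ * s ^ n * 2 ^ n := by
        have h2 : (0:ℝ) ≤ s ^ n * 2 ^ n := by positivity
        calc _ = ‖∑ k ∈ Finset.range (n + 1), coeff k g * coeff n (w ^ k)‖ *
              (s ^ n * 2 ^ n) := by ring
          _ ≤ ‖coeff m g * coeff n (w ^ m)‖ * (s ^ n * 2 ^ n) :=
              mul_le_mul_of_nonneg_right hle h2
          _ = _ := by ring
    _ ≤ ‖coeff m g‖ * ρ ^ m * 2 ^ m := by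
        rw [norm_mul]
        have := hco m n
        have h3 : ‖coeff m g‖ * ‖coeff n (w ^ m)‖ * s ^ n * 2 ^ n
            = ‖coeff m g‖ * (‖coeff n (w ^ m)‖ * (2 * s) ^ n) := by
          rw [mul_pow]; ring
        rw [h3]
        have h4 : ‖coeff n (w ^ m)‖ * (2 * s) ^ n ≤ (2 * ρ) ^ m :=
          (le_div_iff₀ (by positivity)).mp (hco m n)
        calc ‖coeff m g‖ * (‖coeff n (w ^ m)‖ * (2 * s) ^ n)
            ≤ ‖coeff m g‖ * (2 * ρ) ^ m :=
              mul_le_mul_of_nonneg_left h4 (norm_nonneg _)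
          _ = ‖coeff m g‖ * ρ ^ m * 2 ^ m := by rw [mul_pow]; ring

lemma memDisc_comp {w : PowerSeries K} (hw0 : constantCoeff w = 0) {s ρ : ℝ}
    (hs : 0 < s) (hρ : 0 ≤ ρ)
    (hw : ∀ k : ℕ, 1 ≤ k → ‖coeff k w‖ * (2 * s) ^ k ≤ 2 * ρ)
    {g : PowerSeries K} (hg : MemDisc ρ g) : MemDisc s (psComp g w) := by
  set G : ℕ → ℝ := fun m => ‖coeff m g‖ * ρ ^ m with hGdef
  have hGnn : ∀ m, 0 ≤ G m := fun m => by positivity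
  obtain ⟨A, hA⟩ := hg.bddAbove_range
  have hA' : ∀ m, G m ≤ A := fun m => hA (Set.mem_range_self m)
  have hA0 : 0 ≤ A := le_trans (hGnn 0) (hA' 0)
  rw [MemDisc, Metric.tendsto_atTop]
  intro ε hε
  rw [MemDisc, Metric.tendsto_atTop] at hg
  obtain ⟨N, hN⟩ := hg (ε / 2) (by linarith)
  have h2 : Tendsto (fun n : ℕ => (A * 2 ^ N) * (1 / 2 : ℝ) ^ n) atTop (nhds 0) := by
    simpa using (tendsto_pow_atTop_nhds_zero_of_lt_one (r := (1/2:ℝ)) (by norm_num) (by norm_num)).const_mul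
      (A * 2 ^ N)
  rw [Metric.tendsto_atTop] at h2
  obtain ⟨N₂, hN₂⟩ := h2 (ε / 2) (by linarith)
  refine ⟨max N N₂, fun n hn => ?_⟩
  obtain ⟨m, hm, hle⟩ := comp_coeff_bound' hw0 hs hρ hw g n
  have key : ‖coeff n (psComp g w)‖ * s ^ n ≤ G m * 2 ^ m / 2 ^ n := by
    rw [le_div_iff₀ (by positivity : (0:ℝ) < (2:ℝ) ^ n)]
    calc ‖coeff n (psComp g w)‖ * s ^ n * 2 ^ n ≤ ‖coeff m g‖ * ρ ^ m * 2 ^ m := hle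
      _ = G m * 2 ^ m := rfl
  have hnn : (0:ℝ) ≤ ‖coeff n (psComp g w)‖ * s ^ n := by positivity
  rw [Real.dist_eq, sub_zero, abs_of_nonneg hnn]
  rcases le_or_gt N m with hmN | hmN
  · have hGm : G m < ε / 2 := by
      have := hN m hmN
      rwa [Real.dist_eq, sub_zero, abs_of_nonneg (hGnn m)] at this
    have h8 : G m * 2 ^ m / 2 ^ n ≤ G m := by
      rw [div_le_iff₀ (by positivity : (0:ℝ) < (2:ℝ) ^ n)]
      exact mul_le_mul_of_nonneg_left (pow_le_pow_right₀ (by norm_num) hm) (hGnn m)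
    calc ‖coeff n (psComp g w)‖ * s ^ n ≤ G m * 2 ^ m / 2 ^ n := key
      _ ≤ G m := h8
      _ < ε := by linarith
  · have h9 : G m * 2 ^ m / 2 ^ n ≤ A * 2 ^ N * (1 / 2 : ℝ) ^ n := by
      rw [div_le_iff₀ (by positivity : (0:ℝ) < (2:ℝ) ^ n)]
      have : A * 2 ^ N * (1 / 2 : ℝ) ^ n * 2 ^ n = A * 2 ^ N := by
        rw [one_div, inv_pow, mul_assoc, inv_mul_cancel₀ (by positivity : ((2:ℝ) ^ n) ≠ 0),
          mul_one]
      rw [this]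
      exact mul_le_mul (hA' m) (pow_le_pow_right₀ (by norm_num) hmN.le) (by positivity) hA0
    have h10 := hN₂ n (le_trans (le_max_right N N₂) hn)
    rw [Real.dist_eq, sub_zero] at h10
    have h11 : A * 2 ^ N * (1 / 2 : ℝ) ^ n < ε / 2 := lt_of_abs_lt h10
    calc ‖coeff n (psComp g w)‖ * s ^ n ≤ G m * 2 ^ m / 2 ^ n := key
      _ ≤ A * 2 ^ N * (1 / 2 : ℝ) ^ n := h9
      _ < ε := by linarith

lemma gauss1_comp_le {w : PowerSeries K} (hw0 : constantCoeff w = 0) {s ρ : ℝ}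
    (hs : 0 < s) (hρ : 0 ≤ ρ)
    (hw : ∀ k : ℕ, 1 ≤ k → ‖coeff k w‖ * (2 * s) ^ k ≤ 2 * ρ)
    {g : PowerSeries K} (hg : MemDisc ρ g) : gauss1 s (psComp g w) ≤ gauss1 ρ g := by
  refine ciSup_le fun n => ?_
  obtain ⟨m, hm, hle⟩ := comp_coeff_bound' hw0 hs hρ hw g n
  have h1 : ‖coeff n (psComp g w)‖ * s ^ n ≤ ‖coeff m g‖ * ρ ^ m := by
    have h2 : ‖coeff n (psComp g w)‖ * s ^ n * 2 ^ n ≤ ‖coeff m g‖ * ρ ^ m * 2 ^ n :=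
      le_trans hle (mul_le_mul_of_nonneg_left (pow_le_pow_right₀ (by norm_num) hm)
        (by positivity))
    exact le_of_mul_le_mul_right (by linarith [h2]) (by positivity : (0:ℝ) < (2:ℝ) ^ n)
  exact le_trans h1 (le_ciSup hg.bddAbove_range m)

end Anal

section Small
variable {K : Type*} [NormedField K]

variable {K : Type*} [NormedField K]

lemma small_radius {w : PowerSeries K} {t : ℝ} (ht : 0 < t) (hw : MemDisc t w)
    (ha : coeff 1 w ≠ 0) :
    ∃ t₁ : ℝ, 0 < t₁ ∧ t₁ ≤ t ∧ ∀ r : ℝ, 0 < r → r ≤ t₁ → ∀ k : ℕ, 1 ≤ k →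
      ‖coeff k w‖ * (2 * r) ^ k ≤ 2 * (‖coeff 1 w‖ * r) := by
  obtain ⟨A, hA⟩ := hw.bddAbove_range
  have hA' : ∀ k : ℕ, ‖coeff k w‖ * t ^ k ≤ A := fun k => hA (Set.mem_range_self k)
  set M : ℝ := max A 1 with hM
  have hM0 : 0 < M := lt_of_lt_of_le one_pos (le_max_right _ _)
  have hM' : ∀ k : ℕ, ‖coeff k w‖ * t ^ k ≤ M := fun k => (hA' k).trans (le_max_left _ _)
  have hna : 0 < ‖coeff 1 w‖ := norm_pos_iff.mpr ha
  refine ⟨min (t / 2) (‖coeff 1 w‖ * t ^ 2 / (2 * M)), by positivity,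
    (min_le_left _ _).trans (by linarith), fun r hr hr' k hk => ?_⟩
  have hr2 : r ≤ t / 2 := hr'.trans (min_le_left _ _)
  have hr3 : r ≤ ‖coeff 1 w‖ * t ^ 2 / (2 * M) := hr'.trans (min_le_right _ _)
  rcases eq_or_lt_of_le hk with hk1 | hk2
  · rw [← hk1]
    rw [pow_one]
    nlinarith [norm_nonneg (coeff 1 w)]
  · -- k ≥ 2
    have hk2' : 2 ≤ k := hk2
    set q : ℝ := 2 * r / t with hq
    have hq0 : 0 ≤ q := by positivity
    have hq1 : q ≤ 1 := by rw [hq, div_le_one ht]; linarith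
    have e1 : (2 * r) ^ k = t ^ k * q ^ k := by
      rw [hq, div_pow]
      field_simp
    have e2 : ‖coeff k w‖ * (2 * r) ^ k ≤ M * q ^ k := by
      rw [e1, ← mul_assoc]
      exact mul_le_mul_of_nonneg_right (hM' k) (by positivity)
    have e3 : q ^ k ≤ q ^ 2 := pow_le_pow_of_le_one hq0 hq1 hk2'
    have e4 : M * q ^ k ≤ M * q ^ 2 := mul_le_mul_of_nonneg_left e3 hM0.le
    have e5 : M * q ^ 2 ≤ 2 * (‖coeff 1 w‖ * r) := by
      have key : r * (2 * M) ≤ ‖coeff 1 w‖ * t ^ 2 := (le_div_iff₀ (by positivity)).mp hr3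
      have hqt : q * t = 2 * r := by rw [hq]; field_simp
      have h6 : q ^ 2 * t ^ 2 = 4 * r ^ 2 := by
        calc q ^ 2 * t ^ 2 = (q * t) ^ 2 := by ring
          _ = 4 * r ^ 2 := by rw [hqt]; ring
      have ht2 : (0:ℝ) < t ^ 2 := by positivity
      rw [← mul_le_mul_iff_of_pos_right ht2]
      calc M * q ^ 2 * t ^ 2 = M * (q ^ 2 * t ^ 2) := by ring
        _ = 4 * M * r ^ 2 := by rw [h6]; ring
        _ ≤ 2 * (‖coeff 1 w‖ * r) * t ^ 2 := by
            nlinarith [mul_le_mul_of_nonneg_left key (le_of_lt (by positivity : (0:ℝ) < 2 * r))]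
    linarith
end Small

/-- Let `K` be a complete non-archimedean field, `u ∈ K{r₀⁻¹z}` and `v ∈ K{s₀⁻¹z}` with
`u(0) = v(0) = 0` and `u(v(z)) = v(u(z)) = z`. Then there is `r₁ ∈ (0, r₀]` such that for
every `r ∈ (0, r₁]`, precomposition with `u` (i.e. `g ↦ g∘u`) is an isometric isomorphism
`K{(|u'(0)|r)⁻¹z} → K{r⁻¹z}` whose inverse is precomposition with `v`, and moreover
`‖v‖` on the disc of radius `|u'(0)|·r` equals `r`. -/
theorem isometric_iso_of_small_discs {K : Type*} [NormedField K] [IsUltrametricDist K]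
    [CompleteSpace K] (r₀ s₀ : ℝ) (hr₀ : 0 < r₀) (hs₀ : 0 < s₀)
    (u v : PowerSeries K) (hu : MemDisc r₀ u) (hv : MemDisc s₀ v)
    (hu0 : PowerSeries.constantCoeff u = 0) (hv0 : PowerSeries.constantCoeff v = 0)
    (huv : psComp u v = PowerSeries.X) (hvu : psComp v u = PowerSeries.X) :
    ∃ r₁ : ℝ, 0 < r₁ ∧ r₁ ≤ r₀ ∧ ∀ r : ℝ, 0 < r → r ≤ r₁ →
      (∀ g : PowerSeries K, MemDisc (‖PowerSeries.coeff 1 u‖ * r) g →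
        MemDisc r (psComp g u) ∧
        gauss1 r (psComp g u) = gauss1 (‖PowerSeries.coeff 1 u‖ * r) g) ∧
      gauss1 (‖PowerSeries.coeff 1 u‖ * r) v = r ∧
      (∀ h : PowerSeries K, MemDisc r h →
        MemDisc (‖PowerSeries.coeff 1 u‖ * r) (psComp h v) ∧
        psComp (psComp h v) u = h) ∧
      (∀ g : PowerSeries K, MemDisc (‖PowerSeries.coeff 1 u‖ * r) g →
        psComp (psComp g u) v = g) := by
  have hcv : PowerSeries.coeff 1 u * PowerSeries.coeff 1 v = 1 := by
    have h1 := congrArg (PowerSeries.coeff 1) huv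
    rw [coeff_psComp] at h1
    simpa [Finset.sum_range_succ, coeff_zero_eq_constantCoeff, hu0,
      PowerSeries.coeff_one] using h1
  have hc0 : PowerSeries.coeff 1 u ≠ 0 := left_ne_zero_of_mul_eq_one hcv
  have hv1 : PowerSeries.coeff 1 v = (PowerSeries.coeff 1 u)⁻¹ :=
    (inv_eq_of_mul_eq_one_right hcv).symm
  have hv1' : PowerSeries.coeff 1 v ≠ 0 := by
    rw [hv1]; exact inv_ne_zero hc0
  have hnc : 0 < ‖PowerSeries.coeff 1 u‖ := norm_pos_iff.mpr hc0
  obtain ⟨t₁u, ht₁u0, ht₁u, Hu⟩ := small_radius hr₀ hu hc0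
  obtain ⟨t₁v, ht₁v0, ht₁v, Hv⟩ := small_radius hs₀ hv hv1'
  refine ⟨min t₁u (t₁v / ‖PowerSeries.coeff 1 u‖), by positivity,
    (min_le_left _ _).trans ht₁u, fun r hr hrle => ?_⟩
  have hrt1u : r ≤ t₁u := hrle.trans (min_le_left _ _)
  have hcr : 0 < ‖PowerSeries.coeff 1 u‖ * r := by positivity
  have hcrt : ‖PowerSeries.coeff 1 u‖ * r ≤ t₁v := by
    have h2 := hrle.trans (min_le_right _ _)
    rw [le_div_iff₀ hnc] at h2
    linarith
  have HU : ∀ k : ℕ, 1 ≤ k → ‖PowerSeries.coeff k u‖ * (2 * r) ^ k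
      ≤ 2 * (‖PowerSeries.coeff 1 u‖ * r) := fun k hk => Hu r hr hrt1u k hk
  have hval : ‖PowerSeries.coeff 1 v‖ * (‖PowerSeries.coeff 1 u‖ * r) = r := by
    rw [hv1, norm_inv]
    field_simp
  have HV : ∀ k : ℕ, 1 ≤ k →
      ‖PowerSeries.coeff k v‖ * (2 * (‖PowerSeries.coeff 1 u‖ * r)) ^ k ≤ 2 * r := by
    intro k hk
    have h3 := Hv (‖PowerSeries.coeff 1 u‖ * r) hcr hcrt k hk
    rwa [hval] at h3
  have ident1 : ∀ g : PowerSeries K, psComp (psComp g u) v = g := by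
    intro g
    rw [psComp_assoc g u v hv0 hu0, huv, psComp_X_right]
  have ident2 : ∀ h : PowerSeries K, psComp (psComp h v) u = h := by
    intro h
    rw [psComp_assoc h v u hu0 hv0, hvu, psComp_X_right]
  refine ⟨?_, ?_, ?_, fun g _ => ident1 g⟩
  · intro g hg
    have m1 : MemDisc r (psComp g u) := memDisc_comp hu0 hr hcr.le HU hg
    refine ⟨m1, le_antisymm (gauss1_comp_le hu0 hr hcr.le HU hg) ?_⟩
    have h4 := gauss1_comp_le hv0 hcr hr.le HV m1
    rwa [ident1 g] at h4
  · have upper : ∀ k : ℕ,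
        ‖PowerSeries.coeff k v‖ * (‖PowerSeries.coeff 1 u‖ * r) ^ k ≤ r := by
      intro k
      rcases Nat.eq_zero_or_pos k with rfl | hk
      · simpa [coeff_zero_eq_constantCoeff, hv0] using hr.le
      · have t1 := HV k hk
        rw [mul_pow] at t1
        have t2 : (2:ℝ) ≤ 2 ^ k := by
          calc (2:ℝ) = 2 ^ 1 := (pow_one 2).symm
            _ ≤ 2 ^ k := pow_le_pow_right₀ (by norm_num) hk
        nlinarith [mul_nonneg (norm_nonneg (PowerSeries.coeff k v))
          (pow_nonneg hcr.le k)]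
    refine le_antisymm (ciSup_le upper) ?_
    have hb : BddAbove (Set.range fun k : ℕ =>
        ‖PowerSeries.coeff k v‖ * (‖PowerSeries.coeff 1 u‖ * r) ^ k) :=
      ⟨r, by rintro x ⟨k, rfl⟩; exact upper k⟩
    have h5 := le_ciSup hb 1
    rw [pow_one, hval] at h5
    exact h5
  · intro h hh
    exact ⟨memDisc_comp hv0 hcr hr.le HV hh, ident2 h⟩
end

section
/- Let K ⊆ L be a field extension, n ≥ 0, f ∈ K⟦T₁,…,Tₙ⟧ a nonzero formal power series, and g ∈ L⟦T₁,…,Tₙ⟧. If the product f·g has all coefficients in K, then g has all coefficients in K, i.e. g ∈ K⟦T₁,…,Tₙ⟧. -/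
set_option linter.unnecessarySimpa false

/-- Let `K ⊆ L` be a field extension, `f ∈ K⟦T₁,…,Tₙ⟧` nonzero (viewed in `L⟦T⟧` via the
inclusion) and `g ∈ L⟦T₁,…,Tₙ⟧`. If all coefficients of `f·g` lie in `K`, then all
coefficients of `g` lie in `K`. -/
theorem coeff_mem_of_mul_coeff_mem {K L : Type*} [Field K] [Field L] [Algebra K L]
    {n : ℕ} (f : MvPowerSeries (Fin n) K) (hf : f ≠ 0) (g : MvPowerSeries (Fin n) L)
    (h : ∀ d : Fin n →₀ ℕ,
      MvPowerSeries.coeff (R := L) d (MvPowerSeries.map (σ := Fin n) (algebraMap K L) f * g)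
        ∈ Set.range (algebraMap K L)) :
    ∀ d : Fin n →₀ ℕ, MvPowerSeries.coeff (R := L) d g ∈ Set.range (algebraMap K L) := by
  classical
  set V : Submodule K L := LinearMap.range (Algebra.linearMap K L) with hVdef
  have hVrange : (Set.range (algebraMap K L)) = (V : Set L) := by
    ext x; simp [hVdef, Algebra.linearMap_apply]
  obtain ⟨W, hW⟩ := Submodule.exists_isCompl V
  set π : L →ₗ[K] L := V.subtype.comp (Submodule.linearProjOfIsCompl V W hW) with hπdef
  have hπV : ∀ x, π x ∈ V := fun x => (Submodule.linearProjOfIsCompl V W hW x).2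
  have hπid : ∀ x ∈ V, π x = x := by
    intro x hx
    have := Submodule.linearProjOfIsCompl_apply_left hW ⟨x, hx⟩
    exact congrArg (Submodule.subtype V) this
  have hsubW : ∀ x, x - π x ∈ W := by
    intro x
    rw [← Submodule.linearProjOfIsCompl_ker (q := W) hW, LinearMap.mem_ker]
    have : Submodule.linearProjOfIsCompl V W hW (π x) =
        Submodule.linearProjOfIsCompl V W hW x := by
      exact Submodule.projectionOnto_projection hW x
    rw [map_sub]; exact sub_eq_zero.mpr this.symm
  -- the "residual" series with coefficients in W
  set F : MvPowerSeries (Fin n) L := MvPowerSeries.map (σ := Fin n) (algebraMap K L) f with hFdef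
  set q : MvPowerSeries (Fin n) L :=
    (fun d => π (MvPowerSeries.coeff (R := L) d g)) with hqdef
  set r : MvPowerSeries (Fin n) L :=
    (fun d => MvPowerSeries.coeff (R := L) d g - π (MvPowerSeries.coeff (R := L) d g)) with hrdef
  have hr : ∀ d, MvPowerSeries.coeff (R := L) d r
      = MvPowerSeries.coeff (R := L) d g - π (MvPowerSeries.coeff (R := L) d g) := fun d => rfl
  have hrW : ∀ d, MvPowerSeries.coeff (R := L) d r ∈ W := fun d => hsubW _
  -- coefficients of F * r lie in W
  have hFrW : ∀ d, MvPowerSeries.coeff (R := L) d (F * r) ∈ W := by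
    intro d
    rw [MvPowerSeries.coeff_mul]
    apply Submodule.sum_mem
    rintro ⟨e, e'⟩ -
    have h1 : MvPowerSeries.coeff (R := L) e F = algebraMap K L (MvPowerSeries.coeff (R := K) e f) := by
      simp [hFdef]
    rw [h1, ← Algebra.smul_def]
    exact W.smul_mem _ (hrW e')
  -- coefficients of F * r lie in V
  have hFrV : ∀ d, MvPowerSeries.coeff (R := L) d (F * r) ∈ V := by
    intro d
    have hgq : r = g - q := rfl
    rw [hgq, mul_sub, map_sub]
    apply Submodule.sub_mem
    · have := h d; rwa [hVrange] at this
    · rw [MvPowerSeries.coeff_mul]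
      apply Submodule.sum_mem
      rintro ⟨e, e'⟩ -
      have h1 : MvPowerSeries.coeff (R := L) e F = algebraMap K L (MvPowerSeries.coeff (R := K) e f) := by
        simp [hFdef]
      rw [h1, ← Algebra.smul_def]
      exact V.smul_mem _ (hπV _)
  -- hence F * r = 0
  have hFr0 : F * r = 0 := by
    ext d
    have : MvPowerSeries.coeff (R := L) d (F * r) ∈ V ⊓ W := ⟨hFrV d, hFrW d⟩
    rw [hW.inf_eq_bot] at this
    simpa using this
  have hF0 : F ≠ 0 := by
    intro hc
    apply hf
    ext e
    have : MvPowerSeries.coeff (R := L) e F = 0 := by rw [hc]; simp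
    rw [hFdef, MvPowerSeries.coeff_map] at this
    simpa using (algebraMap K L).injective (by simpa using this)
  have hr0 : r = 0 := by
    rcases mul_eq_zero.mp hFr0 with h' | h'
    · exact absurd h' hF0
    · exact h'
  intro d
  have : MvPowerSeries.coeff (R := L) d g = π (MvPowerSeries.coeff (R := L) d g) := by
    have := congrArg (MvPowerSeries.coeff (R := L) d) hr0
    rw [hr d] at this
    simpa [sub_eq_zero] using this
  rw [hVrange, this]
  exact hπV _
end

section
/- Let k be a field, X an abelian variety over k, and φ : X → X a group endomorphism whose minimal polynomial P_φ ∈ ℤ[t] is a product of cyclotomic polynomials. Then there exist n₀, m₀ ≥ 1 depending only on dim X such that (φ^{n₀} − id)^{m₀} = 0 in End(X). Moreover deg P_φ ≤ 4(dim X)². -/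
open Polynomial

lemma prime_pow_le_totient_sq {p n : ℕ} (hp : p.Prime) (hn : 0 < n) (hodd : p ≠ 2) :
    p ^ n ≤ (p ^ n).totient ^ 2 := by
  have h3 : 3 ≤ p := by
    rcases hp.two_le.lt_or_eq with h | h
    · omega
    · omega
  have ht : (p ^ n).totient = p ^ (n - 1) * (p - 1) := Nat.totient_prime_pow hp hn
  have hq : 1 ≤ p ^ (n - 1) := Nat.one_le_pow _ _ hp.pos
  have hpn : p ^ n = p ^ (n - 1) * p := by
    rw [← pow_succ]; congr 1; omega
  obtain ⟨r, hr⟩ : ∃ r, p = r + 3 := ⟨p - 3, by omega⟩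
  have hr1 : p - 1 = r + 2 := by omega
  have hsq : p ≤ (p - 1) * (p - 1) := by rw [hr1]; nlinarith
  calc p ^ n = p ^ (n - 1) * p := hpn
    _ ≤ p ^ (n - 1) * ((p - 1) * (p - 1)) := Nat.mul_le_mul_left _ hsq
    _ ≤ (p ^ (n - 1) * p ^ (n - 1)) * ((p - 1) * (p - 1)) := by
        have := Nat.mul_le_mul_right (p ^ (n - 1)) hq
        nlinarith
    _ = (p ^ (n - 1) * (p - 1)) ^ 2 := by ring
    _ = (p ^ n).totient ^ 2 := by rw [ht]

lemma odd_le_totient_sq : ∀ n : ℕ, Odd n → n ≤ n.totient ^ 2 := by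
  refine Nat.recOnPrimePow (by simp [Nat.odd_iff]) (by simp) ?_
  intro a p n hp hpa hn ih hodd
  have hcop : Nat.Coprime (p ^ n) a := Nat.Coprime.pow_left _ (hp.coprime_iff_not_dvd.mpr hpa)
  have hpodd : p ≠ 2 := by
    rintro rfl
    have : 2 ∣ 2 ^ n * a := Dvd.dvd.mul_right (dvd_pow_self 2 hn.ne') a
    exact (Nat.not_even_iff_odd.mpr hodd) (even_iff_two_dvd.mpr this)
  have haodd : Odd a := by
    rcases Nat.even_or_odd a with h | h
    · exact ((Nat.not_even_iff_odd.mpr hodd) (h.mul_left _)).elim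
    · exact h
  have h1 := prime_pow_le_totient_sq hp hn hpodd
  have h2 := ih haodd
  calc p ^ n * a ≤ (p ^ n).totient ^ 2 * a.totient ^ 2 := Nat.mul_le_mul h1 h2
    _ = ((p ^ n).totient * a.totient) ^ 2 := by ring
    _ = (p ^ n * a).totient ^ 2 := by rw [Nat.totient_mul hcop]

lemma le_two_mul_totient_sq {n : ℕ} (hn : 0 < n) : n ≤ 2 * n.totient ^ 2 := by
  rcases Nat.even_or_odd n with he | ho
  · -- n even
    set k := n.factorization 2 with hk
    have h2 : Nat.Prime 2 := Nat.prime_two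
    have hdec : 2 ^ k * (n / 2 ^ k) = n := Nat.ordProj_mul_ordCompl_eq_self n 2
    set m := n / 2 ^ k with hm
    have hmodd : ¬ 2 ∣ m := Nat.not_dvd_ordCompl h2 hn.ne'
    have hcop : Nat.Coprime (2 ^ k) m := Nat.Coprime.pow_left _ (h2.coprime_iff_not_dvd.mpr hmodd)
    have hk1 : 1 ≤ k := by
      have : 2 ∣ n := even_iff_two_dvd.mp he
      have := (Nat.Prime.factorization_pos_of_dvd h2 hn.ne' this)
      omega
    have hmo : Odd m := Nat.odd_iff.mpr (Nat.two_dvd_ne_zero.mp hmodd)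
    have h1 : m ≤ m.totient ^ 2 := odd_le_totient_sq m hmo
    have ht2 : (2 ^ k).totient = 2 ^ (k - 1) := by
      rw [Nat.totient_prime_pow h2 hk1]; simp
    have hpow : 2 ^ k ≤ 2 * (2 ^ (k - 1)) ^ 2 := by
      have : k ≤ 2 * (k - 1) + 1 := by omega
      calc 2 ^ k ≤ 2 ^ (2 * (k - 1) + 1) := Nat.pow_le_pow_right (by norm_num) this
        _ = 2 * (2 ^ (k - 1)) ^ 2 := by rw [pow_succ, mul_comm 2 (k - 1), pow_mul]; ring
    calc n = 2 ^ k * m := hdec.symm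
      _ ≤ (2 * (2 ^ (k - 1)) ^ 2) * (m.totient ^ 2) := Nat.mul_le_mul hpow h1
      _ = 2 * ((2 ^ k).totient * m.totient) ^ 2 := by rw [ht2]; ring
      _ = 2 * n.totient ^ 2 := by rw [← Nat.totient_mul hcop, hdec]
  · have := odd_le_totient_sq n ho
    omega

/-- **Unipotence bound for endomorphisms of abelian varieties with cyclotomic minimal
polynomial.** Abelian varieties are not available in Mathlib, so the endomorphism algebra
`End(X)_ℚ` of a `g`-dimensional abelian variety `X` is modelled as a finite-dimensional
`ℚ`-algebra `A` with `dim_ℚ A ≤ 4g²` (which holds for abelian varieties), and a group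
endomorphism `φ` of `X` as an element of `A`. If the minimal polynomial `P_φ` of `φ` is a
product of cyclotomic polynomials, then `(φ^{n₀} − 1)^{m₀} = 0` where `n₀, m₀ ≥ 1` depend
only on `g`; moreover `deg P_φ ≤ 4g²`. -/
theorem cyclotomic_minpoly_unipotent (g : ℕ) :
    ∃ n₀ m₀ : ℕ, 1 ≤ n₀ ∧ 1 ≤ m₀ ∧
      ∀ (A : Type) [Ring A] [Algebra ℚ A] [FiniteDimensional ℚ A],
        Module.finrank ℚ A ≤ 4 * g ^ 2 →
        ∀ φ : A,
          (∃ s : Multiset ℕ, (∀ i ∈ s, 0 < i) ∧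
            minpoly ℚ φ = (s.map fun i => Polynomial.cyclotomic i ℚ).prod) →
          (φ ^ n₀ - 1) ^ m₀ = 0 ∧ (minpoly ℚ φ).natDegree ≤ 4 * g ^ 2 := by
  set D := 4 * g ^ 2 with hD
  refine ⟨Nat.factorial (2 * D ^ 2), D + 1, Nat.one_le_iff_ne_zero.mpr (Nat.factorial_pos _).ne',
    Nat.succ_le_succ (Nat.zero_le _), ?_⟩
  set n₀ := Nat.factorial (2 * D ^ 2) with hn₀
  have hn₀pos : 0 < n₀ := Nat.factorial_pos _
  intro A _ _ _ hdim φ hcyc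
  obtain ⟨s, hs, hmin⟩ := hcyc
  -- degree bound via Cayley–Hamilton on left multiplication
  have hL : Function.Injective (Algebra.lmul ℚ A) := Algebra.lmul_injective
  set f := (Algebra.lmul ℚ A) φ with hf
  have hch0 : Polynomial.aeval φ (LinearMap.charpoly f) = 0 := by
    apply hL
    rw [map_zero, ← Polynomial.aeval_algHom_apply]
    exact LinearMap.aeval_self_charpoly f
  have hdeg : (minpoly ℚ φ).natDegree ≤ D := by
    have h1 : (minpoly ℚ φ).degree ≤ (LinearMap.charpoly f).degree :=
      minpoly.min ℚ φ (LinearMap.charpoly_monic f) hch0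
    have h2 : (minpoly ℚ φ).natDegree ≤ (LinearMap.charpoly f).natDegree :=
      Polynomial.natDegree_le_natDegree h1
    rw [LinearMap.charpoly_natDegree] at h2
    exact h2.trans hdim
  refine ⟨?_, hdeg⟩
  -- each i in s divides n₀
  have hidvd : ∀ i ∈ s, i ∣ n₀ := by
    intro i hi
    have hdvd : Polynomial.cyclotomic i ℚ ∣ minpoly ℚ φ := by
      rw [hmin]
      exact Multiset.dvd_prod (Multiset.mem_map_of_mem _ hi)
    have hmne : minpoly ℚ φ ≠ 0 := by
      rw [hmin]
      exact (Polynomial.monic_multiset_prod_of_monic _ _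
        fun j _ => Polynomial.cyclotomic.monic j ℚ).ne_zero
    have htot : i.totient ≤ D := by
      have h0 := Polynomial.natDegree_le_of_dvd hdvd hmne
      rw [Polynomial.natDegree_cyclotomic] at h0
      exact h0.trans hdeg
    have hle : i ≤ 2 * D ^ 2 := by
      have h1 := le_two_mul_totient_sq (hs i hi)
      have h2 : i.totient ^ 2 ≤ D ^ 2 := Nat.pow_le_pow_left htot 2
      omega
    exact Nat.dvd_factorial (hs i hi) hle
  -- minpoly divides (X^n₀ - 1)^(D+1)
  have hcard : Multiset.card s ≤ D + 1 := by
    have hsum : (s.map fun i => (Polynomial.cyclotomic i ℚ).natDegree).sum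
        = (minpoly ℚ φ).natDegree := by
      rw [hmin, Polynomial.natDegree_multiset_prod_of_monic, Multiset.map_map]
      · rfl
      · intro p hp
        obtain ⟨i, _, rfl⟩ := Multiset.mem_map.mp hp
        exact Polynomial.cyclotomic.monic i ℚ
    have hone : ∀ x ∈ s.map fun i => (Polynomial.cyclotomic i ℚ).natDegree, 1 ≤ x := by
      intro x hx
      obtain ⟨i, hi, rfl⟩ := Multiset.mem_map.mp hx
      rw [Polynomial.natDegree_cyclotomic]
      exact Nat.totient_pos.mpr (hs i hi)
    have := Multiset.card_nsmul_le_sum hone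
    simp only [smul_eq_mul, mul_one, Multiset.card_map] at this
    omega
  have hdvd2 : minpoly ℚ φ ∣ ((Polynomial.X : ℚ[X]) ^ n₀ - 1) ^ (D + 1) := by
    rw [hmin]
    have h1 : (s.map fun i => Polynomial.cyclotomic i ℚ).prod
        ∣ (s.map fun _ => (Polynomial.X : ℚ[X]) ^ n₀ - 1).prod :=
      Multiset.prod_dvd_prod_of_dvd _ _ fun i hi => by
        have hmem : i ∈ Nat.divisors n₀ := Nat.mem_divisors.mpr ⟨hidvd i hi, hn₀pos.ne'⟩
        calc Polynomial.cyclotomic i ℚ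
            ∣ ∏ d ∈ Nat.divisors n₀, Polynomial.cyclotomic d ℚ :=
              Finset.dvd_prod_of_mem _ hmem
          _ = (Polynomial.X : ℚ[X]) ^ n₀ - 1 :=
              Polynomial.prod_cyclotomic_eq_X_pow_sub_one hn₀pos ℚ
    rw [Multiset.map_const', Multiset.prod_replicate] at h1
    exact h1.trans (pow_dvd_pow _ hcard)
  obtain ⟨q, hq⟩ := hdvd2
  have := congrArg (Polynomial.aeval φ) hq
  rw [map_mul, minpoly.aeval, zero_mul, map_pow, map_sub, map_pow, map_one,
    Polynomial.aeval_X] at this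
  exact this
end

section
/- Let k be a field, X an abelian variety over k, and φ : X → X a group endomorphism with minimal polynomial P_φ. For any n ≥ 1, P_φ has a cyclotomic polynomial as a factor if and only if P_{φⁿ} (the minimal polynomial of φⁿ) has a cyclotomic polynomial as a factor. Equivalently, P_φ has a cyclotomic factor if and only if φᵐ − id is not surjective for some m ≥ 1. -/
open Polynomial

private lemma aeval_commute' {A : Type*} [Ring A] [Algebra ℚ A] (ψ : A) (p q : ℚ[X]) :
    Commute (aeval ψ p) (aeval ψ q) := by
  unfold Commute SemiconjBy
  rw [← map_mul, ← map_mul, mul_comm]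

private lemma cyc_iff_unit {A : Type*} [Ring A] [Algebra ℚ A] [FiniteDimensional ℚ A] (ψ : A) :
    (∃ i : ℕ, 1 ≤ i ∧ Polynomial.cyclotomic i ℚ ∣ minpoly ℚ ψ) ↔
      (∃ m : ℕ, 1 ≤ m ∧ ¬ IsUnit (ψ ^ m - 1)) := by
  have hint : IsIntegral ℚ ψ := Algebra.IsIntegral.isIntegral ψ
  have hmp0 : minpoly ℚ ψ ≠ 0 := minpoly.ne_zero hint
  constructor
  · rintro ⟨i, hi, c, hc⟩
    refine ⟨i, hi, fun hu => ?_⟩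
    obtain ⟨r, hr⟩ := Polynomial.cyclotomic.dvd_X_pow_sub_one i ℚ
    have hc0 : c ≠ 0 := by rintro rfl; simp at hc; exact hmp0 hc
    have hdeg : (cyclotomic i ℚ).natDegree ≥ 1 := by
      rw [Polynomial.natDegree_cyclotomic]
      exact Nat.totient_pos.mpr hi
    have hcyc0 : (cyclotomic i ℚ) ≠ 0 := Polynomial.cyclotomic_ne_zero i ℚ
    have hcne : (aeval ψ) c ≠ 0 := by
      intro h0
      have hle : (minpoly ℚ ψ).degree ≤ c.degree := minpoly.degree_le_of_ne_zero ℚ ψ hc0 h0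
      have hle' : (minpoly ℚ ψ).natDegree ≤ c.natDegree :=
        Polynomial.natDegree_le_natDegree hle
      have heq : (minpoly ℚ ψ).natDegree = (cyclotomic i ℚ).natDegree + c.natDegree := by
        rw [hc, Polynomial.natDegree_mul hcyc0 hc0]
      omega
    have key : (ψ ^ i - 1) * aeval ψ c = 0 := by
      have hpoly : (X ^ i - 1 : ℚ[X]) * c = minpoly ℚ ψ * r := by rw [hr, hc]; ring
      have h2 := congrArg (aeval ψ) hpoly
      simp only [map_mul, minpoly.aeval, zero_mul] at h2
      simpa using h2
    exact hcne ((hu.mul_right_eq_zero).mp key)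
  · rintro ⟨m, hm, hu⟩
    have hnc : ¬ IsCoprime (X ^ m - 1 : ℚ[X]) (minpoly ℚ ψ) := by
      rintro ⟨a, b, hab⟩
      apply hu
      have h1 : aeval ψ a * (ψ ^ m - 1) = 1 := by
        have := congrArg (aeval ψ) hab
        simpa [minpoly.aeval] using this
      have h2 : (ψ ^ m - 1) * aeval ψ a = 1 := by
        have hc : Commute (aeval ψ a) (ψ ^ m - 1) := by
          have : (ψ ^ m - 1) = aeval ψ (X ^ m - 1 : ℚ[X]) := by simp
          rw [this]; exact aeval_commute' ψ a _
        rw [← hc.eq, h1]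
      exact ⟨⟨ψ ^ m - 1, aeval ψ a, h2, h1⟩, rfl⟩
    rw [← Polynomial.prod_cyclotomic_eq_X_pow_sub_one hm ℚ] at hnc
    have : ∃ i ∈ Nat.divisors m, ¬ IsCoprime (cyclotomic i ℚ) (minpoly ℚ ψ) := by
      by_contra hall
      push_neg at hall
      exact hnc (IsCoprime.prod_left fun i hi => hall i hi)
    obtain ⟨i, hi, hic⟩ := this
    have hipos : 0 < i := Nat.pos_of_mem_divisors hi
    refine ⟨i, hipos, ?_⟩
    have hirr := Polynomial.cyclotomic.irreducible_rat hipos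
    by_contra hdvd
    exact hic (hirr.coprime_iff_not_dvd.mpr hdvd)


/-- **Cyclotomic factors of minimal polynomials of endomorphisms of abelian varieties.**
Abelian varieties are not available in Mathlib, so the endomorphism algebra `End(X)_ℚ` of
an abelian variety `X` over a field `k` is modelled as a finite-dimensional `ℚ`-algebra
`A`, a group endomorphism `φ` as an element of `A`, and surjectivity of an endomorphism
of `X` as invertibility in `End(X)_ℚ = A`. Then for every `n ≥ 1`: the minimal polynomial
`P_φ` has a cyclotomic factor iff `P_{φⁿ}` has a cyclotomic factor, and this happens iff
`φᵐ − 1` is not surjective (not a unit of `A`) for some `m ≥ 1`. -/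
theorem cyclotomic_factor_minpoly_pow {A : Type*} [Ring A] [Algebra ℚ A]
    [FiniteDimensional ℚ A] (φ : A) (n : ℕ) (hn : 1 ≤ n) :
    ((∃ i : ℕ, 1 ≤ i ∧ Polynomial.cyclotomic i ℚ ∣ minpoly ℚ φ) ↔
      (∃ i : ℕ, 1 ≤ i ∧ Polynomial.cyclotomic i ℚ ∣ minpoly ℚ (φ ^ n))) ∧
    ((∃ i : ℕ, 1 ≤ i ∧ Polynomial.cyclotomic i ℚ ∣ minpoly ℚ φ) ↔
      (∃ m : ℕ, 1 ≤ m ∧ ¬ IsUnit (φ ^ m - 1))) := by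
  refine ⟨?_, cyc_iff_unit φ⟩
  rw [cyc_iff_unit φ, cyc_iff_unit (φ ^ n)]
  constructor
  · rintro ⟨m, hm, hu⟩
    refine ⟨m, hm, fun hu' => hu ?_⟩
    obtain ⟨c, hc⟩ : (X ^ m - 1 : ℚ[X]) ∣ (X ^ m) ^ n - 1 := by
      simpa using sub_dvd_pow_sub_pow (X ^ m : ℚ[X]) 1 n
    have heq : (φ ^ n) ^ m - 1 = (φ ^ m - 1) * aeval φ c := by
      have h2 := congrArg (aeval φ) hc
      simp only [map_mul, map_sub, map_pow, aeval_X, map_one] at h2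
      rw [← pow_mul, mul_comm m n, pow_mul] at h2
      exact h2
    rw [heq] at hu'
    have hcom : Commute (φ ^ m - 1) (aeval φ c) := by
      have h3 : φ ^ m - 1 = aeval φ (X ^ m - 1 : ℚ[X]) := by simp
      rw [h3]; exact aeval_commute' φ _ c
    exact (hcom.isUnit_mul_iff.mp hu').1
  · rintro ⟨m, hm, hu⟩
    refine ⟨n * m, Nat.one_le_iff_ne_zero.mpr (by positivity), ?_⟩
    rwa [pow_mul]
end

section
/- Let K be a number field and let X, f, g, Y be as follows: X a projective variety over K, f, g : X → X surjective morphisms over K, Y ⊆ X a closed subvariety. Suppose (1) f∘g = g∘f, (2) f(g(Y)) = Y, (3) Y ∩ gⁿ(Y) ⊊ Y for all n ≥ 1, and (4) Y(K) is Zariski dense in Y. Then for every s ≥ 0, the set (f^{−s−1}(Y) \ ⋃_{0≤i≤s} f^{−i}(Y))(K) is non-empty; in particular the non-invariant Preimages Question has a negative answer for (X, f, Y). The key identity used is fᵐ(gⁿ(Y)) = g^{n−m}(Y) for all n ≥ m ≥ 0. -/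
open Function Set

private lemma irr_subset_of_subset_biUnion {X : Type*} [TopologicalSpace X] {Z : Set X}
    (hZ : IsIrreducible Z) (C : ℕ → Set X) (hC : ∀ i, IsClosed (C i)) :
    ∀ t : ℕ, Z ⊆ ⋃ i ∈ Finset.range t, C i → ∃ i < t, Z ⊆ C i := by
  intro t
  induction t with
  | zero => intro h; simpa using absurd (h hZ.nonempty.choose_spec) (by simp)
  | succ t ih =>
    intro h
    have hsplit : Z ⊆ (⋃ i ∈ Finset.range t, C i) ∪ C t := by
      intro x hx
      rcases mem_iUnion₂.mp (h hx) with ⟨i, hi, hxi⟩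
      rcases Nat.lt_succ_iff_lt_or_eq.mp (Finset.mem_range.mp hi) with hi' | rfl
      · exact Or.inl (mem_iUnion₂.mpr ⟨i, Finset.mem_range.mpr hi', hxi⟩)
      · exact Or.inr hxi
    have hcl : IsClosed (⋃ i ∈ Finset.range t, C i) :=
      isClosed_biUnion_finset fun i _ => hC i
    rcases (isPreirreducible_iff_isClosed_union_isClosed.mp hZ.2) _ _ hcl (hC t) hsplit with
      h' | h'
    · obtain ⟨i, hi, hZi⟩ := ih h'
      exact ⟨i, Nat.lt_succ_of_lt hi, hZi⟩
    · exact ⟨t, Nat.lt_succ_self t, h'⟩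

/-- **Recipe for counterexamples to the non-invariant Preimages Question.**
Since projective varieties over a number field are not available in Mathlib, a projective
variety `X` over `K` is modelled by its underlying (Noetherian) Zariski topological space
together with its set `pts` of `K`-rational points, and the surjective morphisms `f, g`
by continuous, surjective, closed maps with finite fibres (finite surjective morphisms)
preserving rational points. `Y` is a closed subvariety, i.e. an irreducible closed set.
Assume (1) `f∘g = g∘f`, (2) `f(g(Y)) = Y`, (3) `Y ∩ gⁿ(Y) ⊊ Y` for all `n ≥ 1`, and
(4) `Y(K)` is Zariski dense in `Y`. Then the key identity `fᵐ(gⁿ(Y)) = g^{n−m}(Y)` holds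
for all `n ≥ m ≥ 0`, and for every `s ≥ 0` the set
`(f^{−s−1}(Y) \ ⋃_{0 ≤ i ≤ s} f^{−i}(Y))(K)` is non-empty — a negative answer to the
non-invariant Preimages Question. -/
theorem gpiq_counterexample_recipe {X : Type*} [TopologicalSpace X]
    [TopologicalSpace.NoetherianSpace X] (pts : Set X) (f g : X → X)
    (hfc : Continuous f) (hgc : Continuous g)
    (hfs : Surjective f) (hgs : Surjective g)
    (hfcl : IsClosedMap f) (hgcl : IsClosedMap g)
    (hffin : ∀ x : X, (f ⁻¹' {x}).Finite) (hgfin : ∀ x : X, (g ⁻¹' {x}).Finite)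
    (hfpts : MapsTo f pts pts) (hgpts : MapsTo g pts pts)
    (Y : Set X) (hYcl : IsClosed Y) (hYirr : IsIrreducible Y)
    (h1 : f ∘ g = g ∘ f) (h2 : f '' (g '' Y) = Y)
    (h3 : ∀ n : ℕ, 1 ≤ n → Y ∩ g^[n] '' Y ⊂ Y)
    (h4 : Y ⊆ closure (Y ∩ pts)) :
    (∀ n m : ℕ, m ≤ n → f^[m] '' (g^[n] '' Y) = g^[n - m] '' Y) ∧
    ∀ s : ℕ,
      (((f^[s + 1] ⁻¹' Y) \ ⋃ i ∈ Finset.range (s + 1), f^[i] ⁻¹' Y) ∩ pts).Nonempty := by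
  -- commutation
  have hcomm : Function.Semiconj f g g := fun x => congrFun h1 x
  have himg : ∀ (n : ℕ) (W : Set X), f '' (g^[n] '' W) = g^[n] '' (f '' W) := by
    intro n W
    rw [← Set.image_comp, (hcomm.iterate_right n).comp_eq, Set.image_comp]
  -- one step of the key identity
  have hstep : ∀ n : ℕ, 1 ≤ n → f '' (g^[n] '' Y) = g^[n - 1] '' Y := by
    intro n hn
    obtain ⟨k, rfl⟩ := Nat.exists_eq_add_of_le hn
    have h5 : g^[1 + k] '' Y = g^[k] '' (g '' Y) := by
      rw [Nat.add_comm, Function.iterate_add, Set.image_comp, Function.iterate_one]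
    rw [h5, himg, h2]
    simp
  -- the key identity
  have key : ∀ n m : ℕ, m ≤ n → f^[m] '' (g^[n] '' Y) = g^[n - m] '' Y := by
    intro n m
    induction m generalizing n with
    | zero => simp
    | succ m ih =>
      intro hmn
      have h1n : 1 ≤ n := le_trans (Nat.succ_le_succ (Nat.zero_le m)) hmn
      rw [Function.iterate_succ, Set.image_comp, hstep n h1n, ih (n - 1) (by omega),
        show n - 1 - m = n - (m + 1) from by omega]
  refine ⟨key, fun s => ?_⟩
  set Z : Set X := g^[s + 1] '' Y with hZdef
  have hZirr : IsIrreducible Z := hYirr.image _ (hgc.iterate (s + 1)).continuousOn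
  have hZsub : Z ⊆ f^[s + 1] ⁻¹' Y := by
    rw [← Set.image_subset_iff, key (s + 1) (s + 1) le_rfl]
    simp
  -- Z is not contained in the union of the preimages
  have hnot : ¬ Z ⊆ ⋃ i ∈ Finset.range (s + 1), f^[i] ⁻¹' Y := by
    intro hsub
    obtain ⟨i, hi, hZi⟩ := irr_subset_of_subset_biUnion hZirr
      (fun i => f^[i] ⁻¹' Y) (fun i => hYcl.preimage (hfc.iterate i)) (s + 1) hsub
    set n := s + 1 - i with hn
    have hn1 : 1 ≤ n := by omega
    have hsubY : g^[n] '' Y ⊆ Y := by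
      have himage : f^[i] '' Z ⊆ Y := Set.image_subset_iff.mpr hZi
      rw [hZdef, key (s + 1) i (by omega)] at himage
      exact himage
    -- infinite strictly descending chain of closed sets
    have hmono : ∀ k : ℕ, g^[n * (k + 1)] '' Y ⊂ g^[n * k] '' Y := by
      intro k
      have heq : g^[n * (k + 1)] '' Y = g^[n * k] '' (g^[n] '' Y) := by
        rw [Nat.mul_succ, Function.iterate_add, Set.image_comp]
      constructor
      · rw [heq]; exact Set.image_mono hsubY
      · intro hle
        have heq2 : g^[n * k] '' Y = g^[n * (k + 1)] '' Y :=
          le_antisymm hle (by rw [heq]; exact Set.image_mono hsubY)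
        have e1 : f^[n * k] '' (g^[n * k] '' Y) = Y := by
          rw [key (n * k) (n * k) le_rfl]; simp
        have e2 : f^[n * k] '' (g^[n * (k + 1)] '' Y) = g^[n] '' Y := by
          rw [key (n * (k + 1)) (n * k) (by nlinarith),
            show n * (k + 1) - n * k = n from by rw [Nat.mul_succ]; omega]
        rw [heq2, e2] at e1
        have h6 := h3 n hn1
        rw [e1, Set.inter_self] at h6
        exact h6.2 subset_rfl
    have hgclit : ∀ m : ℕ, IsClosedMap (g^[m]) := by
      intro m
      induction m with
      | zero => simpa using IsClosedMap.id
      | succ m ih => rw [Function.iterate_succ]; exact ih.comp hgcl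
    have hcl : ∀ k : ℕ, IsClosed (g^[n * k] '' Y) := fun k => (hgclit (n * k)) _ hYcl
    set c : ℕ → TopologicalSpace.Closeds X := fun k => ⟨g^[n * k] '' Y, hcl k⟩ with hc
    have hdesc : ∀ k, c (k + 1) < c k := fun k => hmono k
    have wf := (wellFounded_lt (α := TopologicalSpace.Closeds X))
    have hne : (Set.range c).Nonempty := ⟨c 0, 0, rfl⟩
    obtain ⟨k, hk⟩ := wf.min_mem (Set.range c) hne
    exact wf.not_lt_min (Set.range c) ⟨k + 1, rfl⟩ (hk ▸ hdesc k)
  -- rational points of Z are dense in Z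
  have hZdense : Z ⊆ closure (Z ∩ pts) := by
    calc Z = g^[s + 1] '' Y := rfl
      _ ⊆ g^[s + 1] '' closure (Y ∩ pts) := Set.image_mono h4
      _ ⊆ closure (g^[s + 1] '' (Y ∩ pts)) :=
          image_closure_subset_closure_image (hgc.iterate (s + 1))
      _ ⊆ closure (Z ∩ pts) := closure_mono
          (Set.subset_inter (Set.image_mono Set.inter_subset_left)
            (fun x ⟨y, hy, hyx⟩ => hyx ▸ (hgpts.iterate (s + 1)) hy.2))
  obtain ⟨z, hzZ, hzU⟩ := Set.not_subset.mp hnot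
  have hUo : IsOpen (⋃ i ∈ Finset.range (s + 1), f^[i] ⁻¹' Y)ᶜ :=
    (isClosed_biUnion_finset fun i _ => hYcl.preimage (hfc.iterate i)).isOpen_compl
  have hz' := hZdense hzZ
  rw [mem_closure_iff] at hz'
  obtain ⟨p, hpU, hpZ, hppts⟩ := hz' _ hUo hzU
  exact ⟨p, ⟨⟨hZsub hpZ, hpU⟩, hppts⟩⟩
end
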